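/- arXiv:1103.2963 — 5 statements merged into one kernel-verified Lean document; each statement's English description precedes it below -/
import Mathlib

section
/- The element R = ∑_{g,h∈G} (δ_g ⊗ 1) ⊗ (δ_h ⊗ g) in D(G) ⊗ D(G) is invertible and satisfies the quasitriangularity axioms: R Δ(x) = Δ^op(x) R for all x ∈ D(G), (Δ ⊗ id)(R) = R₁₃R₂₃, and (id ⊗ Δ)(R) = R₁₃R₁₂. -/
open Finset

/-- The unit `∑_g δ_g ⊗ 1` of `D(G)` (functions `G × G → K`, `x (g,h)` being the
coefficient of `δ_g ⊗ h`). -/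
def doubleOne {K G : Type*} [Field K] [Group G] [DecidableEq G] : G × G → K :=
  fun p => if p.2 = 1 then 1 else 0

/-- The coproduct `Δ(δ_g ⊗ h) = ∑_{g'g''=g} (δ_{g'} ⊗ h) ⊗ (δ_{g''} ⊗ h)`. -/
def doubleComul {K G : Type*} [Field K] [Group G] [DecidableEq G]
    (x : G × G → K) : (G × G) × (G × G) → K :=
  fun q => if q.1.2 = q.2.2 then x (q.1.1 * q.2.1, q.1.2) else 0

/-- The product on `D(G) ⊗ D(G)`. -/
def doubleMul₂ {K G : Type*} [Field K] [Group G] [Fintype G] [DecidableEq G]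
    (X Y : (G × G) × (G × G) → K) : (G × G) × (G × G) → K :=
  fun q => ∑ h : G, ∑ h' : G,
    X ((q.1.1, h), (q.2.1, h')) *
      Y ((h⁻¹ * q.1.1 * h, h⁻¹ * q.1.2), (h'⁻¹ * q.2.1 * h', h'⁻¹ * q.2.2))

/-- The unit of `D(G) ⊗ D(G)`. -/
def doubleOne₂ {K G : Type*} [Field K] [Group G] [DecidableEq G] :
    (G × G) × (G × G) → K :=
  fun q => doubleOne q.1 * doubleOne q.2

/-- The product on `D(G) ⊗ D(G) ⊗ D(G)`. -/
def doubleMul₃ {K G : Type*} [Field K] [Group G] [Fintype G] [DecidableEq G]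
    (X Y : (G × G) × (G × G) × (G × G) → K) : (G × G) × (G × G) × (G × G) → K :=
  fun t => ∑ h₁ : G, ∑ h₂ : G, ∑ h₃ : G,
    X ((t.1.1, h₁), (t.2.1.1, h₂), (t.2.2.1, h₃)) *
      Y ((h₁⁻¹ * t.1.1 * h₁, h₁⁻¹ * t.1.2),
         (h₂⁻¹ * t.2.1.1 * h₂, h₂⁻¹ * t.2.1.2),
         (h₃⁻¹ * t.2.2.1 * h₃, h₃⁻¹ * t.2.2.2))

/-- The R-matrix `R = ∑_{g,h} (δ_g ⊗ 1) ⊗ (δ_h ⊗ g)` of `D(G)`. -/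
def doubleR {K G : Type*} [Field K] [Group G] [DecidableEq G] :
    (G × G) × (G × G) → K :=
  fun q => if q.1.2 = 1 ∧ q.2.2 = q.1.1 then 1 else 0

/-- The element `R = ∑_{g,h∈G} (δ_g ⊗ 1) ⊗ (δ_h ⊗ g)` is invertible in
`D(G) ⊗ D(G)` and satisfies the quasitriangularity axioms
`R Δ(x) = Δᵒᵖ(x) R`, `(Δ ⊗ id)(R) = R₁₃R₂₃` and `(id ⊗ Δ)(R) = R₁₃R₁₂`. -/
theorem double_R_quasitriangular {K G : Type*} [Field K] [Group G] [Fintype G]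
    [DecidableEq G] :
    -- invertibility
    (∃ R' : (G × G) × (G × G) → K,
      doubleMul₂ (doubleR (K := K) (G := G)) R' = doubleOne₂ ∧
      doubleMul₂ R' (doubleR (K := K) (G := G)) = doubleOne₂) ∧
    -- `R Δ(x) = Δᵒᵖ(x) R`
    (∀ x : G × G → K,
      doubleMul₂ doubleR (doubleComul x)
        = doubleMul₂ (fun q => doubleComul x (q.2, q.1)) doubleR) ∧
    -- `(Δ ⊗ id)(R) = R₁₃ R₂₃`
    ((fun t : (G × G) × (G × G) × (G × G) =>
        if t.1.2 = t.2.1.2 then doubleR (K := K) ((t.1.1 * t.2.1.1, t.1.2), t.2.2) else 0)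
      = doubleMul₃ (fun t => doubleR (t.1, t.2.2) * doubleOne t.2.1)
          (fun t => doubleOne t.1 * doubleR (t.2.1, t.2.2))) ∧
    -- `(id ⊗ Δ)(R) = R₁₃ R₁₂`
    ((fun t : (G × G) × (G × G) × (G × G) =>
        if t.2.1.2 = t.2.2.2 then doubleR (K := K) (t.1, (t.2.1.1 * t.2.2.1, t.2.1.2)) else 0)
      = doubleMul₃ (fun t => doubleR (t.1, t.2.2) * doubleOne t.2.1)
          (fun t => doubleR (t.1, t.2.1) * doubleOne t.2.2)) := by
  refine ⟨⟨fun q => if q.1.2 = 1 ∧ q.2.2 = q.1.1⁻¹ then 1 else 0, ?_, ?_⟩, ?_, ?_, ?_⟩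
  · funext q
    obtain ⟨⟨a₁, b₁⟩, a₂, b₂⟩ := q
    simp only [doubleMul₂, doubleR, doubleOne₂, doubleOne]
    rw [Fintype.sum_eq_single (1 : G) (by intro h hne; simp [hne]),
      Fintype.sum_eq_single a₁ (by intro h' hne; simp [hne])]
    by_cases h1 : b₁ = 1 <;> by_cases h2 : b₂ = 1 <;> simp [h1, h2]
  · funext q
    obtain ⟨⟨a₁, b₁⟩, a₂, b₂⟩ := q
    simp only [doubleMul₂, doubleR, doubleOne₂, doubleOne]
    rw [Fintype.sum_eq_single (1 : G) (by intro h hne; simp [hne]),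
      Fintype.sum_eq_single a₁⁻¹ (by intro h' hne; simp [hne])]
    by_cases h1 : b₁ = 1 <;> by_cases h2 : b₂ = 1 <;> simp [h1, h2]
  · intro x
    funext q
    obtain ⟨⟨a₁, b₁⟩, a₂, b₂⟩ := q
    simp only [doubleMul₂, doubleR, doubleComul]
    rw [Fintype.sum_eq_single (1 : G) (by intro h hne; simp [hne]),
      Fintype.sum_eq_single a₁ (by intro h' hne; simp [hne]),
      Fintype.sum_eq_single b₁ (by intro h hne; simp [inv_mul_eq_one, hne]),
      Fintype.sum_eq_single (b₂ * (b₁⁻¹ * a₁ * b₁)⁻¹) (by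
        intro h' hne
        have hn : ¬(b₁⁻¹ * b₁ = 1 ∧ h'⁻¹ * b₂ = b₁⁻¹ * a₁ * b₁) := by
          rintro ⟨-, hc⟩
          apply hne
          rw [inv_mul_eq_iff_eq_mul] at hc
          rw [hc]; group
        rw [if_neg hn, mul_zero])]
    by_cases hc : b₂ = a₁ * b₁
    · subst hc
      simp [mul_assoc]
    · have h1 : ¬((1:G)⁻¹ * b₁ = a₁⁻¹ * b₂) := by
        intro h
        apply hc
        rw [inv_one, one_mul, eq_inv_mul_iff_mul_eq] at h
        rw [← h]
      have h2 : ¬(b₂ * (b₁⁻¹ * a₁ * b₁)⁻¹ = b₁) := by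
        intro h
        apply hc
        rw [mul_inv_eq_iff_eq_mul] at h
        rw [h]; group
      rw [if_neg h1, if_neg h2, mul_zero, zero_mul]
  · funext t
    obtain ⟨⟨a₁, b₁⟩, ⟨a₂, b₂⟩, a₃, b₃⟩ := t
    simp only [doubleMul₃, doubleR, doubleOne]
    rw [Fintype.sum_eq_single (1 : G) (by intro h hne; simp [hne]),
      Fintype.sum_eq_single (1 : G) (by intro h hne; simp [hne]),
      Fintype.sum_eq_single a₁ (by intro h hne; simp [hne])]
    by_cases h1 : b₁ = 1 <;> by_cases h2 : b₂ = 1 <;>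
      by_cases h3 : b₃ = a₁ * a₂ <;>
      simp [h1, h2, h3, eq_comm, mul_assoc, eq_inv_mul_iff_mul_eq]
  · funext t
    obtain ⟨⟨a₁, b₁⟩, ⟨a₂, b₂⟩, a₃, b₃⟩ := t
    simp only [doubleMul₃, doubleR, doubleOne]
    rw [Fintype.sum_eq_single (1 : G) (by intro h hne; simp [hne]),
      Fintype.sum_eq_single (1 : G) (by intro h hne; simp [hne]),
      Fintype.sum_eq_single a₁ (by intro h hne; simp [hne])]
    by_cases h1 : b₁ = 1 <;> by_cases h2 : b₂ = a₁ <;>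
      by_cases h3 : b₃ = a₁ <;>
      simp [h1, h2, h3, eq_comm, mul_assoc, eq_inv_mul_iff_mul_eq, inv_mul_eq_one]
end

section
/- The element θ = ∑_{g∈G} δ_g ⊗ g⁻¹ is a central invertible element of the Drinfel'd double D(G), i.e., θ x = x θ for all x ∈ D(G), with inverse θ⁻¹ = ∑_{g∈G} δ_g ⊗ g. -/
open Finset

/-- Product of the Drinfel'd double `D(G)` (functions `G × G → K`, `x (g,h)` being the
coefficient of `δ_g ⊗ h`): `(δ_g ⊗ h)(δ_{g'} ⊗ h') = δ_{g, h g' h⁻¹}(δ_g ⊗ hh')`. -/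
def doubleMul {K G : Type*} [Field K] [Group G] [Fintype G] [DecidableEq G]
    (x y : G × G → K) : G × G → K :=
  fun p => ∑ h : G, x (p.1, h) * y (h⁻¹ * p.1 * h, h⁻¹ * p.2)

/-- The ribbon element `θ = ∑_g δ_g ⊗ g⁻¹` of `D(G)`. -/
def doubleTheta {K G : Type*} [Field K] [Group G] [DecidableEq G] : G × G → K :=
  fun p => if p.2 = p.1⁻¹ then 1 else 0

/-- The element `∑_g δ_g ⊗ g` of `D(G)`. -/
def doubleThetaInv {K G : Type*} [Field K] [Group G] [DecidableEq G] : G × G → K :=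
  fun p => if p.2 = p.1 then 1 else 0

/-- The element `θ = ∑_g δ_g ⊗ g⁻¹` is a central invertible element of the Drinfel'd
double `D(G)`, with inverse `θ⁻¹ = ∑_g δ_g ⊗ g`. -/
theorem double_theta_central_invertible {K G : Type*} [Field K] [Group G] [Fintype G]
    [DecidableEq G] :
    (∀ x : G × G → K, doubleMul doubleTheta x = doubleMul x doubleTheta) ∧
    doubleMul (doubleTheta : G × G → K) doubleThetaInv = doubleOne ∧
    doubleMul (doubleThetaInv : G × G → K) doubleTheta = doubleOne := by
  refine ⟨fun x => ?_, ?_, ?_⟩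
  · funext p
    show (∑ h : G, doubleTheta (p.1, h) * x (h⁻¹ * p.1 * h, h⁻¹ * p.2))
        = ∑ h : G, x (p.1, h) * doubleTheta (h⁻¹ * p.1 * h, h⁻¹ * p.2)
    rw [Fintype.sum_eq_single p.1⁻¹ (fun h hh => by simp [doubleTheta, hh]),
      Fintype.sum_eq_single (p.1 * p.2) (fun h hh => by
        simp only [doubleTheta]
        rw [if_neg, mul_zero]
        intro e
        rw [mul_inv_rev, mul_inv_rev, inv_inv] at e
        exact hh (by rw [mul_left_cancel e]; group))]
    simp [doubleTheta]
  · funext p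
    show (∑ h : G, doubleTheta (p.1, h) * doubleThetaInv (h⁻¹ * p.1 * h, h⁻¹ * p.2)) = _
    rw [Fintype.sum_eq_single p.1⁻¹ (fun h hh => by simp [doubleTheta, hh])]
    simp [doubleTheta, doubleThetaInv, doubleOne]
  · funext p
    show (∑ h : G, doubleThetaInv (p.1, h) * doubleTheta (h⁻¹ * p.1 * h, h⁻¹ * p.2)) = _
    rw [Fintype.sum_eq_single p.1 (fun h hh => by simp [doubleThetaInv, hh])]
    simp [doubleTheta, doubleThetaInv, doubleOne]
end

section
/- Let a finite group G act on a finite set M, and let K be an algebraically closed field of characteristic zero (or not dividing |G|). For irreducible finite-dimensional representations of the action groupoid M//G (i.e., M-graded vector spaces V = ⊕_{m∈M}V_m with G-action satisfying g·V_m ⊆ V_{g·m}) with characters χ(m,g) := Tr(ρ(g)P(m)), the characters of non-isomorphic irreducibles are orthogonal and each has unit length with respect to the form ⟨f,f'⟩ = (1/|G|) ∑_{g∈G, m∈M} f(m,g⁻¹) f'(m,g). -/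
open Finset

/-- A finite-dimensional `K`-linear representation of the action groupoid `M//G`:
a `K`-vector space with a grading by `M` (given by a complete family of orthogonal
projections `P m`) and a `G`-action `ρ` satisfying `ρ(g) V_m ⊆ V_{g•m}`. -/
structure AGRep (K M G : Type) [Field K] [Fintype M] [Group G] [MulAction G M] where
  carrier : Type
  [acg : AddCommGroup carrier]
  [mod : Module K carrier]
  [fd : FiniteDimensional K carrier]
  P : M → Module.End K carrier
  rho : G →* Module.End K carrier
  proj_idem : ∀ m, P m * P m = P m
  proj_orth : ∀ m n, m ≠ n → P m * P n = 0
  proj_sum : ∑ m : M, P m = 1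
  compat : ∀ (g : G) (m : M), rho g * P m = P (g • m) * rho g

attribute [instance] AGRep.acg AGRep.mod AGRep.fd

variable {K M G : Type} [Field K] [Fintype M] [Group G] [MulAction G M]

/-- The character `χ(m,g) = Tr(ρ(g) P(m))` of a representation of `M//G`. -/
noncomputable def AGRep.char (R : AGRep K M G) (p : M × G) : K :=
  LinearMap.trace K R.carrier (R.rho p.2 * R.P p.1)

/-- Irreducibility: no proper nonzero graded invariant subspace. -/
def AGRep.Irreducible (R : AGRep K M G) : Prop :=
  Nontrivial R.carrier ∧
    ∀ U : Submodule K R.carrier,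
      (∀ g : G, U.map (R.rho g) ≤ U) → (∀ m : M, U.map (R.P m) ≤ U) →
        U = ⊥ ∨ U = ⊤

/-- Isomorphism of representations of `M//G`: a grade-preserving equivariant linear
equivalence. -/
def AGRep.Iso (R S : AGRep K M G) : Prop :=
  ∃ e : R.carrier ≃ₗ[K] S.carrier,
    (∀ (g : G) (v : R.carrier), e (R.rho g v) = S.rho g (e v)) ∧
    (∀ (m : M) (v : R.carrier), e (R.P m v) = S.P m (e v))

namespace AGRep

/-! ### Auxiliary lemmas -/

lemma P_P_same (R : AGRep K M G) (m : M) (v : R.carrier) :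
    R.P m (R.P m v) = R.P m v := by
  rw [← Module.End.mul_apply, R.proj_idem]

lemma P_P_ne (R : AGRep K M G) {m n : M} (h : m ≠ n) (v : R.carrier) :
    R.P m (R.P n v) = 0 := by
  rw [← Module.End.mul_apply, R.proj_orth m n h, LinearMap.zero_apply]

lemma rho_P_apply (R : AGRep K M G) (g : G) (m : M) (v : R.carrier) :
    R.rho g (R.P m v) = R.P (g • m) (R.rho g v) := by
  rw [← Module.End.mul_apply, R.compat, Module.End.mul_apply]

lemma P_rho_apply (R : AGRep K M G) (g : G) (n : M) (v : R.carrier) :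
    R.P n (R.rho g v) = R.rho g (R.P (g⁻¹ • n) v) := by
  rw [rho_P_apply, smul_inv_smul]

/-- The averaging operator turning any linear map into an intertwiner. -/
noncomputable def avg [Fintype G] (R S : AGRep K M G) (f : S.carrier →ₗ[K] R.carrier) :
    S.carrier →ₗ[K] R.carrier :=
  ∑ g : G, (R.rho g⁻¹ : Module.End K R.carrier) ∘ₗ
    (∑ m : M, (R.P m : Module.End K R.carrier) ∘ₗ f ∘ₗ (S.P m : Module.End K S.carrier)) ∘ₗ
    (S.rho g : Module.End K S.carrier)

lemma Q_apply_P (R S : AGRep K M G) (f : S.carrier →ₗ[K] R.carrier) (n : M) (v : S.carrier) :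
    (∑ m : M, (R.P m : Module.End K R.carrier) ∘ₗ f ∘ₗ (S.P m : Module.End K S.carrier))
      (S.P n v) = R.P n (f (S.P n v)) := by
  rw [LinearMap.sum_apply, Finset.sum_eq_single n]
  · simp [P_P_same]
  · intro m _ hmn
    simp [LinearMap.comp_apply, P_P_ne S hmn]
  · simp

lemma P_Q_apply (R S : AGRep K M G) (f : S.carrier →ₗ[K] R.carrier) (n : M) (v : S.carrier) :
    R.P n ((∑ m : M, (R.P m : Module.End K R.carrier) ∘ₗ f ∘ₗ
      (S.P m : Module.End K S.carrier)) v) = R.P n (f (S.P n v)) := by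
  rw [LinearMap.sum_apply, map_sum, Finset.sum_eq_single n]
  · simp [P_P_same]
  · intro m _ hmn
    simp [LinearMap.comp_apply, P_P_ne R hmn.symm]
  · simp

lemma avg_apply [Fintype G] (R S : AGRep K M G) (f : S.carrier →ₗ[K] R.carrier)
    (v : S.carrier) :
    avg R S f v = ∑ g : G, R.rho g⁻¹
      ((∑ m : M, (R.P m : Module.End K R.carrier) ∘ₗ f ∘ₗ (S.P m : Module.End K S.carrier))
        (S.rho g v)) := by
  simp [avg, LinearMap.sum_apply, LinearMap.comp_apply]

lemma avg_P [Fintype G] (R S : AGRep K M G) (f : S.carrier →ₗ[K] R.carrier)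
    (n : M) (v : S.carrier) :
    avg R S f (S.P n v) = R.P n (avg R S f v) := by
  rw [avg_apply, avg_apply, map_sum]
  refine Finset.sum_congr rfl fun g _ => ?_
  rw [rho_P_apply S g n v, Q_apply_P, P_rho_apply R g⁻¹ n, inv_inv, P_Q_apply]

lemma avg_rho [Fintype G] (R S : AGRep K M G) (f : S.carrier →ₗ[K] R.carrier)
    (h : G) (v : S.carrier) :
    avg R S f (S.rho h v) = R.rho h (avg R S f v) := by
  rw [avg_apply, avg_apply, map_sum]
  refine Fintype.sum_equiv (Equiv.mulRight h) _ _ fun g => ?_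
  simp only [Equiv.coe_mulRight]
  rw [show S.rho g (S.rho h v) = S.rho (g * h) v by rw [map_mul, Module.End.mul_apply]]
  rw [show ∀ x : R.carrier, R.rho h (R.rho (g * h)⁻¹ x) = R.rho g⁻¹ x from fun x => by
    rw [← Module.End.mul_apply, ← map_mul, show h * (g * h)⁻¹ = g⁻¹ by group]]

/-- Schur's lemma I: a nonzero intertwiner between irreducibles gives an isomorphism. -/
lemma intw_zero_or_iso {R S : AGRep K M G} (hR : R.Irreducible) (hS : S.Irreducible)
    (T : S.carrier →ₗ[K] R.carrier)
    (h1 : ∀ (g : G) (v : S.carrier), T (S.rho g v) = R.rho g (T v))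
    (h2 : ∀ (m : M) (v : S.carrier), T (S.P m v) = R.P m (T v)) :
    T = 0 ∨ R.Iso S := by
  by_cases hT : T = 0
  · exact Or.inl hT
  right
  have hker : LinearMap.ker T = ⊥ := by
    rcases hS.2 (LinearMap.ker T)
      (fun g x hx => by
        obtain ⟨y, hy, rfl⟩ := Submodule.mem_map.mp hx
        have hy' : T y = 0 := hy
        simp [LinearMap.mem_ker, h1, hy'])
      (fun m x hx => by
        obtain ⟨y, hy, rfl⟩ := Submodule.mem_map.mp hx
        have hy' : T y = 0 := hy
        simp [LinearMap.mem_ker, h2, hy']) with hk | hk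
    · exact hk
    · exact absurd (LinearMap.ker_eq_top.mp hk) hT
  have hrange : LinearMap.range T = ⊤ := by
    rcases hR.2 (LinearMap.range T)
      (fun g x hx => by
        obtain ⟨y, hy, rfl⟩ := Submodule.mem_map.mp hx
        obtain ⟨z, rfl⟩ := hy
        exact ⟨S.rho g z, h1 g z⟩)
      (fun m x hx => by
        obtain ⟨y, hy, rfl⟩ := Submodule.mem_map.mp hx
        obtain ⟨z, rfl⟩ := hy
        exact ⟨S.P m z, h2 m z⟩) with hk | hk
    · exact absurd (LinearMap.range_eq_bot.mp hk) hT
    · exact hk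
  have hbij : Function.Bijective T :=
    ⟨LinearMap.ker_eq_bot.mp hker, LinearMap.range_eq_top.mp hrange⟩
  let e0 : S.carrier ≃ₗ[K] R.carrier := LinearEquiv.ofBijective T hbij
  have he0 : ∀ x, e0 x = T x := fun x => rfl
  refine ⟨e0.symm, fun g v => ?_, fun m v => ?_⟩
  · apply e0.injective
    rw [e0.apply_symm_apply, he0, h1, ← he0, e0.apply_symm_apply]
  · apply e0.injective
    rw [e0.apply_symm_apply, he0, h2, ← he0, e0.apply_symm_apply]

/-- Schur's lemma II: a self-intertwiner of an irreducible is a scalar. -/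
lemma intw_scalar [IsAlgClosed K] {R : AGRep K M G} (hR : R.Irreducible)
    (T : Module.End K R.carrier)
    (h1 : ∀ (g : G) (v : R.carrier), T (R.rho g v) = R.rho g (T v))
    (h2 : ∀ (m : M) (v : R.carrier), T (R.P m v) = R.P m (T v)) :
    ∃ c : K, T = c • (1 : Module.End K R.carrier) := by
  haveI := hR.1
  obtain ⟨c, hc⟩ := Module.End.exists_eigenvalue T
  refine ⟨c, ?_⟩
  have hU : T.eigenspace c = ⊤ := by
    rcases hR.2 (T.eigenspace c)
      (fun g x hx => by
        obtain ⟨y, hy, rfl⟩ := Submodule.mem_map.mp hx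
        have hy' : T y = c • y := Module.End.mem_eigenspace_iff.mp hy
        exact Module.End.mem_eigenspace_iff.mpr (by rw [h1, hy', map_smul]))
      (fun m x hx => by
        obtain ⟨y, hy, rfl⟩ := Submodule.mem_map.mp hx
        have hy' : T y = c • y := Module.End.mem_eigenspace_iff.mp hy
        exact Module.End.mem_eigenspace_iff.mpr (by rw [h2, hy', map_smul])) with hk | hk
    · exact absurd hk hc
    · exact hk
  ext v
  have hv : v ∈ T.eigenspace c := hU ▸ Submodule.mem_top
  simpa using Module.End.mem_eigenspace_iff.mp hv

lemma trace_eq_sum_repr {ι V : Type*} [AddCommGroup V] [Module K V]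
    [Module.Finite K V] [Fintype ι] [DecidableEq ι]
    (b : Module.Basis ι K V) (f : V →ₗ[K] V) :
    LinearMap.trace K V f = ∑ i, b.repr (f (b i)) i := by
  rw [LinearMap.trace_eq_matrix_trace K b f, Matrix.trace]
  simp [Matrix.diag, LinearMap.toMatrix_apply]

lemma trace_avg [Fintype G] (R : AGRep K M G) (f : Module.End K R.carrier) :
    LinearMap.trace K R.carrier (avg R R f)
      = (Fintype.card G : K) * LinearMap.trace K R.carrier f := by
  have hQ : LinearMap.trace K R.carrier (∑ m : M, (R.P m : Module.End K R.carrier) ∘ₗ f ∘ₗ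
      (R.P m : Module.End K R.carrier)) = LinearMap.trace K R.carrier f := by
    rw [map_sum]
    have : ∀ m : M, LinearMap.trace K R.carrier
        ((R.P m : Module.End K R.carrier) ∘ₗ f ∘ₗ (R.P m : Module.End K R.carrier))
        = LinearMap.trace K R.carrier (f * R.P m) := fun m => by
      rw [← Module.End.mul_eq_comp, ← Module.End.mul_eq_comp, LinearMap.trace_mul_comm,
        mul_assoc, R.proj_idem]
    rw [Finset.sum_congr rfl fun m _ => this m, ← map_sum, ← Finset.mul_sum, R.proj_sum, mul_one]
  rw [avg, map_sum]
  have hterm : ∀ g : G, LinearMap.trace K R.carrier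
      ((R.rho g⁻¹ : Module.End K R.carrier) ∘ₗ (∑ m : M, (R.P m : Module.End K R.carrier) ∘ₗ f ∘ₗ
        (R.P m : Module.End K R.carrier)) ∘ₗ (R.rho g : Module.End K R.carrier))
      = LinearMap.trace K R.carrier f := by
    intro g
    rw [← Module.End.mul_eq_comp, ← Module.End.mul_eq_comp, LinearMap.trace_mul_comm,
      mul_assoc, ← map_mul, mul_inv_cancel, map_one, mul_one, hQ]
  rw [Finset.sum_congr rfl fun g _ => hterm g, Finset.sum_const, Finset.card_univ,
    nsmul_eq_mul]

lemma trace_E {ι V : Type*} [AddCommGroup V] [Module K V]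
    [Module.Finite K V] [Fintype ι] [DecidableEq ι]
    (b : Module.Basis ι K V) (i j : ι) :
    LinearMap.trace K V (LinearMap.smulRight (b.coord j) (b i))
      = if i = j then 1 else 0 := by
  rw [trace_eq_sum_repr b]
  simp only [LinearMap.smulRight_apply, Module.Basis.coord_apply, Module.Basis.repr_self, map_smul,
    Finsupp.smul_apply, Finsupp.single_apply, smul_eq_mul]
  rw [Finset.sum_eq_single j]
  · simp [eq_comm]
  · intro k _ hk
    simp [hk]
  · simp

lemma sum_swap4 {α β γ δ : Type*} [Fintype α] [Fintype β] [Fintype γ] [Fintype δ]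
    (t : α → β → γ → δ → K) :
    ∑ i : γ, ∑ j : δ, ∑ g : α, ∑ m : β, t g m i j
      = ∑ g : α, ∑ m : β, ∑ i : γ, ∑ j : δ, t g m i j := by
  calc ∑ i : γ, ∑ j : δ, ∑ g : α, ∑ m : β, t g m i j
      = ∑ i : γ, ∑ g : α, ∑ j : δ, ∑ m : β, t g m i j :=
        Finset.sum_congr rfl fun i _ => Finset.sum_comm
    _ = ∑ g : α, ∑ i : γ, ∑ j : δ, ∑ m : β, t g m i j := Finset.sum_comm
    _ = ∑ g : α, ∑ i : γ, ∑ m : β, ∑ j : δ, t g m i j :=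
        Finset.sum_congr rfl fun g _ => Finset.sum_congr rfl fun i _ => Finset.sum_comm
    _ = ∑ g : α, ∑ m : β, ∑ i : γ, ∑ j : δ, t g m i j :=
        Finset.sum_congr rfl fun g _ => Finset.sum_comm

lemma sum_char_eq [Fintype G] (R S : AGRep K M G) {ιR ιS : Type}
    [Fintype ιR] [Fintype ιS] [DecidableEq ιR] [DecidableEq ιS]
    (bR : Module.Basis ιR K R.carrier) (bS : Module.Basis ιS K S.carrier) :
    ∑ g : G, ∑ m : M, R.char (m, g⁻¹) * S.char (m, g)
      = ∑ i : ιR, ∑ j : ιS,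
          bR.repr ((avg R S (LinearMap.smulRight (bS.coord j) (bR i))) (bS j)) i := by
  have key : ∀ (i : ιR) (j : ιS),
      bR.repr ((avg R S (LinearMap.smulRight (bS.coord j) (bR i))) (bS j)) i
        = ∑ g : G, ∑ m : M,
            (bR.repr (R.rho g⁻¹ (R.P m (bR i))) i) *
              (bS.repr (S.P m (S.rho g (bS j))) j) := by
    intro i j
    rw [avg_apply, map_sum, Finset.sum_apply']
    refine Finset.sum_congr rfl fun g _ => ?_
    rw [LinearMap.sum_apply, map_sum, map_sum, Finset.sum_apply']
    refine Finset.sum_congr rfl fun m _ => ?_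
    simp only [LinearMap.comp_apply, LinearMap.smulRight_apply, Module.Basis.coord_apply,
      map_smul, Finsupp.smul_apply, smul_eq_mul]
    ring
  have hchR : ∀ (g : G) (m : M),
      R.char (m, g⁻¹) = ∑ i, bR.repr (R.rho g⁻¹ (R.P m (bR i))) i := by
    intro g m
    rw [char, trace_eq_sum_repr bR]
    simp [Module.End.mul_apply]
  have hchS : ∀ (g : G) (m : M),
      S.char (m, g) = ∑ j, bS.repr (S.P m (S.rho g (bS j))) j := by
    intro g m
    rw [char, LinearMap.trace_mul_comm, trace_eq_sum_repr bS]
    simp [Module.End.mul_apply]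
  simp_rw [key, hchR, hchS, Finset.sum_mul_sum]
  exact (sum_swap4 _).symm

end AGRep

open AGRep in
/-- Orthogonality of characters: over an algebraically closed field of characteristic
zero, the characters of irreducible representations of the finite action groupoid
`M//G` are orthogonal and of unit length for the bilinear form
`⟨f,f'⟩ = (1/|G|) ∑_{g,m} f(m,g⁻¹) f'(m,g)`. -/
theorem agRep_char_orthogonality [Fintype G] [IsAlgClosed K] [CharZero K]
    (R S : AGRep K M G) (hR : R.Irreducible) (hS : S.Irreducible) :
    (¬ R.Iso S →
      (Fintype.card G : K)⁻¹ *
        ∑ g : G, ∑ m : M, R.char (m, g⁻¹) * S.char (m, g) = 0) ∧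
    (Fintype.card G : K)⁻¹ *
        ∑ g : G, ∑ m : M, R.char (m, g⁻¹) * R.char (m, g) = 1 := by
  classical
  constructor
  · intro hIso
    set bR := Module.finBasis K R.carrier
    set bS := Module.finBasis K S.carrier
    rw [sum_char_eq R S bR bS]
    have hz : ∀ (i : Fin (Module.finrank K R.carrier)) (j : Fin (Module.finrank K S.carrier)),
        avg R S (LinearMap.smulRight (bS.coord j) (bR i)) = 0 := by
      intro i j
      rcases intw_zero_or_iso hR hS (avg R S (LinearMap.smulRight (bS.coord j) (bR i)))
        (fun g v => avg_rho R S _ g v) (fun m v => avg_P R S _ m v) with h | h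
      · exact h
      · exact absurd h hIso
    simp [hz]
  · haveI := hR.1
    set bR := Module.finBasis K R.carrier
    set d := Module.finrank K R.carrier with hd
    have hdpos : 0 < d := Module.finrank_pos
    have hdK : (d : K) ≠ 0 := Nat.cast_ne_zero.mpr hdpos.ne'
    have hGK : (Fintype.card G : K) ≠ 0 := Nat.cast_ne_zero.mpr Fintype.card_ne_zero
    rw [sum_char_eq R R bR bR]
    choose c hc using fun (i j : Fin d) =>
      intw_scalar hR (avg R R (LinearMap.smulRight (bR.coord j) (bR i)))
        (fun g v => avg_rho R R _ g v) (fun m v => avg_P R R _ m v)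
    have hcd : ∀ i : Fin d, c i i * (d : K) = (Fintype.card G : K) := by
      intro i
      have h1 := trace_avg R (LinearMap.smulRight (bR.coord i) (bR i))
      rw [hc i i, map_smul, LinearMap.trace_one, trace_E, if_pos rfl, mul_one,
        smul_eq_mul] at h1
      exact h1
    have hsum : ∀ (i j : Fin d),
        bR.repr ((avg R R (LinearMap.smulRight (bR.coord j) (bR i))) (bR j)) i
          = if j = i then c i j else 0 := by
      intro i j
      rw [hc i j]
      simp [LinearMap.smul_apply, Module.Basis.repr_self, Finsupp.single_apply]
    simp_rw [hsum]
    simp only [Finset.sum_ite_eq', Finset.mem_univ, if_true]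
    have : ∑ i : Fin d, c i i = (Fintype.card G : K) := by
      have h2 : (∑ i : Fin d, c i i) * (d : K) = (d : K) * (Fintype.card G : K) := by
        rw [Finset.sum_mul]
        simp_rw [hcd]
        rw [Finset.sum_const, Finset.card_univ, Fintype.card_fin, nsmul_eq_mul]
      exact mul_right_cancel₀ hdK (h2.trans (mul_comm _ _))
    rw [this, inv_mul_cancel₀ hGK]
end

section
/- Let a finite group G act on a finite set M, and K an algebraically closed field of characteristic zero. If (V_i)_{i∈I} is a complete set of representatives of isomorphism classes of irreducible representations of the action groupoid M//G with dimensions d_i = dim_K V_i, then ∑_{i∈I} d_i² = |M|·|G|. -/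
open Finset

variable {K M G : Type} [Field K] [Fintype M] [Group G] [MulAction G M]

namespace AGRep

/-- Hom space between two reps. -/
def homSet (R S : AGRep K M G) : Submodule K (R.carrier →ₗ[K] S.carrier) where
  carrier := {f | (∀ (g : G) (v : R.carrier), f (R.rho g v) = S.rho g (f v)) ∧
      (∀ (m : M) (v : R.carrier), f (R.P m v) = S.P m (f v))}
  add_mem' := by
    rintro f h ⟨hf1, hf2⟩ ⟨hh1, hh2⟩
    exact ⟨fun g v => by simp [LinearMap.add_apply, hf1, hh1, map_add],
      fun m v => by simp [LinearMap.add_apply, hf2, hh2, map_add]⟩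
  zero_mem' := ⟨fun g v => by simp, fun m v => by simp⟩
  smul_mem' := by
    rintro c f ⟨hf1, hf2⟩
    exact ⟨fun g v => by simp [LinearMap.smul_apply, hf1, map_smul],
      fun m v => by simp [LinearMap.smul_apply, hf2, map_smul]⟩

lemma mem_homSet {R S : AGRep K M G} {f : R.carrier →ₗ[K] S.carrier} :
    f ∈ homSet R S ↔ (∀ (g : G) (v : R.carrier), f (R.rho g v) = S.rho g (f v)) ∧
      (∀ (m : M) (v : R.carrier), f (R.P m v) = S.P m (f v)) := Iff.rfl

lemma map_le_apply {W : Type} [AddCommGroup W] [Module K W] {U : Submodule K W}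
    {f : Module.End K W} (h : U.map f ≤ U) {x : W} (hx : x ∈ U) : f x ∈ U :=
  h ⟨x, hx, rfl⟩

/-- Subrepresentation on an invariant graded submodule. -/
def sub (R : AGRep K M G) (U : Submodule K R.carrier)
    (hg : ∀ g : G, U.map (R.rho g) ≤ U) (hP : ∀ m : M, U.map (R.P m) ≤ U) :
    AGRep K M G where
  carrier := U
  P m := (R.P m).restrict (fun x hx => map_le_apply (hP m) hx)
  rho := { toFun := fun g => (R.rho g).restrict (fun x hx => map_le_apply (hg g) hx)
           map_one' := by
             ext x
             simp [LinearMap.restrict_coe_apply, map_one]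
           map_mul' := by
             intro g h
             ext x
             simp [LinearMap.restrict_coe_apply, Module.End.mul_apply, map_mul] }
  proj_idem := by
    intro m; ext x
    simp only [Module.End.mul_apply, LinearMap.restrict_coe_apply]
    exact LinearMap.ext_iff.mp (R.proj_idem m) x |>.trans rfl |> fun h => by
      simpa [Module.End.mul_apply] using h
  proj_orth := by
    intro m n hmn; ext x
    have := LinearMap.ext_iff.mp (R.proj_orth m n hmn) x
    simp only [Module.End.mul_apply, LinearMap.zero_apply] at this ⊢
    simp [LinearMap.restrict_coe_apply, this]
  proj_sum := by
    ext x
    have := LinearMap.ext_iff.mp R.proj_sum (x : R.carrier)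
    simp only [LinearMap.sum_apply, Module.End.one_apply] at this ⊢
    rw [← this]
    simp [LinearMap.restrict_coe_apply]
  compat := by
    intro g m; ext x
    have := LinearMap.ext_iff.mp (R.compat g m) (x : R.carrier)
    simp only [Module.End.mul_apply] at this ⊢
    simp [LinearMap.restrict_coe_apply, this]

end AGRep

namespace AGRep

variable {R S : AGRep K M G}

lemma schur (hR : R.Irreducible) (f : R.carrier →ₗ[K] S.carrier)
    (hf : f ∈ homSet R S) : f = 0 ∨ Function.Injective f := by
  rcases hf with ⟨h1, h2⟩
  have hker : ∀ g : G, (LinearMap.ker f).map (R.rho g) ≤ LinearMap.ker f := by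
    rintro g x ⟨y, hy, rfl⟩
    simp only [LinearMap.mem_ker] at hy ⊢
    rw [h1, hy, map_zero]
  have hkerP : ∀ m : M, (LinearMap.ker f).map (R.P m) ≤ LinearMap.ker f := by
    rintro m x ⟨y, hy, rfl⟩
    simp only [LinearMap.mem_ker] at hy ⊢
    rw [h2, hy, map_zero]
  rcases hR.2 _ hker hkerP with h | h
  · right; exact LinearMap.ker_eq_bot.mp h
  · left; ext x
    have : x ∈ LinearMap.ker f := h ▸ Submodule.mem_top
    simpa using this

lemma schur' (hR : R.Irreducible) (hS : S.Irreducible) (f : R.carrier →ₗ[K] S.carrier)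
    (hf : f ∈ homSet R S) : f = 0 ∨ Function.Bijective f := by
  rcases schur hR f hf with h | hinj
  · exact Or.inl h
  rcases hf with ⟨h1, h2⟩
  have hrg : ∀ g : G, (LinearMap.range f).map (S.rho g) ≤ LinearMap.range f := by
    rintro g x ⟨y, ⟨z, rfl⟩, rfl⟩
    exact ⟨R.rho g z, (h1 g z).symm ▸ rfl⟩
  have hrgP : ∀ m : M, (LinearMap.range f).map (S.P m) ≤ LinearMap.range f := by
    rintro m x ⟨y, ⟨z, rfl⟩, rfl⟩
    exact ⟨R.P m z, (h2 m z).symm ▸ rfl⟩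
  rcases hS.2 _ hrg hrgP with h | h
  · left
    have := LinearMap.range_eq_bot.mp h
    exact this
  · right
    exact ⟨hinj, LinearMap.range_eq_top.mp h⟩

/-- A nonzero hom between irreducibles yields an isomorphism. -/
lemma iso_of_ne_zero (hR : R.Irreducible) (hS : S.Irreducible)
    (f : R.carrier →ₗ[K] S.carrier) (hf : f ∈ homSet R S) (hne : f ≠ 0) : R.Iso S := by
  rcases schur' hR hS f hf with h | hb
  · exact absurd h hne
  exact ⟨LinearEquiv.ofBijective f hb, hf.1, hf.2⟩

lemma homSet_eq_bot (hR : R.Irreducible) (hS : S.Irreducible) (h : ¬ R.Iso S) :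
    homSet R S = ⊥ := by
  rw [Submodule.eq_bot_iff]
  intro f hf
  by_contra hne
  exact h (iso_of_ne_zero hR hS f hf hne)

lemma homSet_self (hR : R.Irreducible) [IsAlgClosed K] :
    homSet R R = K ∙ (LinearMap.id : R.carrier →ₗ[K] R.carrier) := by
  have hid : (LinearMap.id : R.carrier →ₗ[K] R.carrier) ∈ homSet R R :=
    ⟨fun g v => rfl, fun m v => rfl⟩
  apply le_antisymm
  · intro f hf
    have : Nontrivial R.carrier := hR.1
    obtain ⟨c, hc⟩ := Module.End.exists_eigenvalue (f : Module.End K R.carrier)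
    set idm : R.carrier →ₗ[K] R.carrier := LinearMap.id with hidm
    have hmem : f - c • idm ∈ homSet R R :=
      Submodule.sub_mem _ hf (Submodule.smul_mem _ c hid)
    have hnotinj : ¬ Function.Injective (f - c • idm) := by
      obtain ⟨v, hv⟩ := hc.exists_hasEigenvector
      intro hinj
      have : (f - c • idm) v = 0 := by
        have h1 : f v = c • v := hv.apply_eq_smul
        simp [hidm, LinearMap.sub_apply, h1]
      exact hv.2 (by simpa using hinj (a₁ := v) (a₂ := 0) (by simpa using this))
    rcases schur hR _ hmem with h | h
    · have hfc : f = c • idm := sub_eq_zero.mp h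
      rw [hfc, hidm]
      exact Submodule.smul_mem _ c (Submodule.mem_span_singleton_self _)
    · exact absurd h hnotinj
  · rw [Submodule.span_singleton_le_iff_mem]
    exact hid

lemma finrank_homSet_self (hR : R.Irreducible) [IsAlgClosed K] :
    Module.finrank K (homSet R R) = 1 := by
  rw [homSet_self hR]
  apply finrank_span_singleton
  intro h
  have : Nontrivial R.carrier := hR.1
  obtain ⟨v, w, hvw⟩ := this
  exact hvw (by
    have := LinearMap.ext_iff.mp h v
    have h2 := LinearMap.ext_iff.mp h w
    simp at this h2
    rw [this, h2])

end AGRep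

namespace AGRep

/-- Maschke: an equivariant graded projection onto an invariant graded submodule. -/
lemma exists_proj [Fintype G] [CharZero K] (R : AGRep K M G) (U : Submodule K R.carrier)
    (hg : ∀ g : G, U.map (R.rho g) ≤ U) (hP : ∀ m : M, U.map (R.P m) ≤ U) :
    ∃ π : Module.End K R.carrier,
      (∀ x ∈ U, π x = x) ∧ (∀ x, π x ∈ U) ∧
      (∀ g : G, R.rho g * π = π * R.rho g) ∧ (∀ m : M, R.P m * π = π * R.P m) := by
  classical
  obtain ⟨q, hq⟩ := Submodule.exists_isCompl U
  set π0 : Module.End K R.carrier :=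
    U.subtype ∘ₗ (U.projectionOnto q hq) with hπ0
  have hπ0U : ∀ x ∈ U, π0 x = x := fun x hx => by
    simp [hπ0, Submodule.projectionOnto_apply_left hq ⟨x, hx⟩]
  have hπ0mem : ∀ x, π0 x ∈ U := fun x => (U.projectionOnto q hq x).2
  set π1 : Module.End K R.carrier := ∑ m : M, R.P m * π0 * R.P m with hπ1
  have hπ1U : ∀ x ∈ U, π1 x = x := by
    intro x hx
    have : ∀ m : M, (R.P m * π0 * R.P m) x = R.P m x := by
      intro m
      have hPx : R.P m x ∈ U := map_le_apply (hP m) hx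
      simp only [Module.End.mul_apply]
      rw [hπ0U _ hPx]
      exact LinearMap.ext_iff.mp (R.proj_idem m) x |>.symm ▸
        (by simpa [Module.End.mul_apply] using LinearMap.ext_iff.mp (R.proj_idem m) x)
    rw [hπ1, LinearMap.sum_apply]
    rw [Finset.sum_congr rfl (fun m _ => this m)]
    rw [← LinearMap.sum_apply, R.proj_sum, Module.End.one_apply]
  have hπ1mem : ∀ x, π1 x ∈ U := by
    intro x
    rw [hπ1, LinearMap.sum_apply]
    apply Submodule.sum_mem
    intro m _
    simp only [Module.End.mul_apply]
    exact map_le_apply (hP m) (hπ0mem _)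
  have hπ1P : ∀ m : M, R.P m * π1 = π1 * R.P m := by
    intro m
    have key : ∀ k : M, R.P m * (R.P k * π0 * R.P k) = (R.P k * π0 * R.P k) * R.P m := by
      intro k
      by_cases hkm : k = m
      · subst hkm
        rw [← mul_assoc, ← mul_assoc, R.proj_idem, mul_assoc (R.P k * π0), R.proj_idem]
      · rw [← mul_assoc, ← mul_assoc, R.proj_orth m k (Ne.symm hkm), zero_mul, zero_mul,
          mul_assoc, R.proj_orth k m hkm, mul_zero]
    rw [hπ1, Finset.mul_sum, Finset.sum_mul]
    exact Finset.sum_congr rfl (fun k _ => key k)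
  set c : K := (Fintype.card G : K)⁻¹ with hc
  have hcard : (Fintype.card G : K) ≠ 0 := Nat.cast_ne_zero.mpr Fintype.card_ne_zero
  set π2 : Module.End K R.carrier := c • ∑ g : G, R.rho g * π1 * R.rho g⁻¹ with hπ2
  have hconj : ∀ (h g : G), R.rho h * (R.rho g * π1 * R.rho g⁻¹) * R.rho h⁻¹
      = R.rho (h * g) * π1 * R.rho (h * g)⁻¹ := by
    intro h g
    rw [mul_inv_rev, map_mul, map_mul]
    simp only [mul_assoc]
  have hrho_inv : ∀ g : G, R.rho g * R.rho g⁻¹ = 1 := fun g => by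
    rw [← map_mul, mul_inv_cancel, map_one]
  have hrho_inv' : ∀ g : G, R.rho g⁻¹ * R.rho g = 1 := fun g => by
    rw [← map_mul, inv_mul_cancel, map_one]
  have hπ2U : ∀ x ∈ U, π2 x = x := by
    intro x hx
    have : ∀ g : G, (R.rho g * π1 * R.rho g⁻¹) x = x := by
      intro g
      have hgx : R.rho g⁻¹ x ∈ U := map_le_apply (hg g⁻¹) hx
      simp only [Module.End.mul_apply]
      rw [hπ1U _ hgx]
      have := LinearMap.ext_iff.mp (hrho_inv g) x
      simpa [Module.End.mul_apply] using this
    rw [hπ2]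
    simp only [LinearMap.smul_apply, LinearMap.sum_apply]
    rw [Finset.sum_congr rfl (fun g _ => this g), Finset.sum_const]
    simp only [Finset.card_univ, hc]
    rw [← Nat.cast_smul_eq_nsmul K, smul_smul, inv_mul_cancel₀ hcard, one_smul]
  have hπ2mem : ∀ x, π2 x ∈ U := by
    intro x
    rw [hπ2]
    simp only [LinearMap.smul_apply, LinearMap.sum_apply]
    apply Submodule.smul_mem
    apply Submodule.sum_mem
    intro g _
    simp only [Module.End.mul_apply]
    exact map_le_apply (hg g) (hπ1mem _)
  refine ⟨π2, hπ2U, hπ2mem, ?_, ?_⟩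
  · intro h
    have : R.rho h * π2 * R.rho h⁻¹ = π2 := by
      rw [hπ2, mul_smul_comm, smul_mul_assoc, Finset.mul_sum, Finset.sum_mul]
      congr 1
      rw [Finset.sum_congr rfl (fun g _ => hconj h g)]
      exact Fintype.sum_bijective (fun g => h * g) (Group.mulLeft_bijective h)
        (fun g => R.rho (h * g) * π1 * R.rho (h * g)⁻¹)
        (fun x => R.rho x * π1 * R.rho x⁻¹) (fun x => rfl)
    calc R.rho h * π2 = R.rho h * π2 * (R.rho h⁻¹ * R.rho h) := by rw [hrho_inv' h, mul_one]
      _ = (R.rho h * π2 * R.rho h⁻¹) * R.rho h := (mul_assoc (R.rho h * π2) _ _).symm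
      _ = π2 * R.rho h := by rw [this]
  · intro n
    have key : ∀ g : G, R.P n * (R.rho g * π1 * R.rho g⁻¹)
        = (R.rho g * π1 * R.rho g⁻¹) * R.P n := by
      intro g
      have c1 : R.P n * R.rho g = R.rho g * R.P (g⁻¹ • n) := by
        have := R.compat g (g⁻¹ • n)
        rw [smul_inv_smul] at this
        exact this.symm
      have c2 : R.P (g⁻¹ • n) * R.rho g⁻¹ = R.rho g⁻¹ * R.P n := (R.compat g⁻¹ n).symm
      calc R.P n * (R.rho g * π1 * R.rho g⁻¹)
          = (R.P n * R.rho g) * π1 * R.rho g⁻¹ := by rw [← mul_assoc, ← mul_assoc]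
        _ = R.rho g * (R.P (g⁻¹ • n) * π1) * R.rho g⁻¹ := by rw [c1, mul_assoc (R.rho g)]
        _ = R.rho g * (π1 * R.P (g⁻¹ • n)) * R.rho g⁻¹ := by rw [hπ1P]
        _ = R.rho g * π1 * (R.P (g⁻¹ • n) * R.rho g⁻¹) := by
            rw [mul_assoc, mul_assoc, mul_assoc]
        _ = R.rho g * π1 * (R.rho g⁻¹ * R.P n) := by rw [c2]
        _ = (R.rho g * π1 * R.rho g⁻¹) * R.P n := by rw [← mul_assoc, mul_assoc]
    rw [hπ2, mul_smul_comm, smul_mul_assoc, Finset.mul_sum, Finset.sum_mul]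
    congr 1
    exact Finset.sum_congr rfl (fun g _ => key g)

end AGRep

namespace AGRep

open Module
open scoped Classical

variable [Fintype G]

/-- The regular representation of `M//G`. -/
noncomputable def regular (K M G : Type) [Field K] [Fintype M] [Group G] [MulAction G M]
    [Fintype G] : AGRep K M G where
  carrier := M × G → K
  P n := { toFun := fun f p => if p.2 • p.1 = n then f p else 0
           map_add' := by intro f h; funext p; by_cases hp : p.2 • p.1 = n <;> simp [hp]
           map_smul' := by intro c f; funext p; by_cases hp : p.2 • p.1 = n <;> simp [hp] }
  rho := { toFun := fun h =>
             { toFun := fun f p => f (p.1, h⁻¹ * p.2)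
               map_add' := by intro f k; funext p; simp
               map_smul' := by intro c f; funext p; simp }
           map_one' := by ext f p; simp
           map_mul' := by intro g h; ext f p; simp [Module.End.mul_apply, mul_assoc] }
  proj_idem := by
    intro n
    refine LinearMap.ext fun f => funext fun p => ?_
    simp only [Module.End.mul_apply, LinearMap.coe_mk, AddHom.coe_mk]
    by_cases hp : p.2 • p.1 = n <;> simp [hp]
  proj_orth := by
    intro n n' h
    refine LinearMap.ext fun f => funext fun p => ?_
    simp only [Module.End.mul_apply, LinearMap.coe_mk, AddHom.coe_mk, LinearMap.zero_apply]
    by_cases hp : p.2 • p.1 = n'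
    · have hn : ¬ p.2 • p.1 = n := fun hc => h (hc.symm.trans hp)
      rw [if_neg hn]; rfl
    · simp only [hp, if_false]
      split <;> rfl
  proj_sum := by
    refine LinearMap.ext fun f => funext fun p => ?_
    simp only [LinearMap.sum_apply, LinearMap.coe_mk, AddHom.coe_mk, Module.End.one_apply]
    rw [Finset.sum_apply]
    rw [Finset.sum_ite_eq (Finset.univ) (p.2 • p.1) (fun _ => f p)]
    simp
  compat := by
    intro g n
    refine LinearMap.ext fun f => funext fun p => ?_
    simp only [Module.End.mul_apply, LinearMap.coe_mk, AddHom.coe_mk, MonoidHom.coe_mk,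
      OneHom.coe_mk]
    have : (g⁻¹ * p.2) • p.1 = n ↔ p.2 • p.1 = g • n := by
      rw [mul_smul]
      constructor
      · intro h; rw [← h, smul_inv_smul]
      · intro h; rw [h, inv_smul_smul]
    by_cases hp : (g⁻¹ * p.2) • p.1 = n
    · rw [if_pos hp, if_pos (this.mp hp)]
    · rw [if_neg hp, if_neg (fun hc => hp (this.mpr hc))]

lemma finrank_regular :
    finrank K ((regular K M G).carrier) = Fintype.card M * Fintype.card G := by
  show finrank K (M × G → K) = _
  rw [Module.finrank_fintype_fun_eq_card, Fintype.card_prod]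

lemma regular_P_apply (n : M) (f : M × G → K) (p : M × G) :
    ((regular K M G).P n f : M × G → K) p = if p.2 • p.1 = n then f p else 0 := rfl

lemma regular_rho_apply (h : G) (f : M × G → K) (p : M × G) :
    ((regular K M G).rho h f : M × G → K) p = f (p.1, h⁻¹ * p.2) := rfl


/-- Evaluation-at-identity functional attached to a hom into the regular rep. -/
noncomputable def toDualMap (V : AGRep K M G) :
    homSet V (regular K M G) →ₗ[K] Module.Dual K V.carrier where
  toFun f := { toFun := fun v => ∑ m : M, (f.1 v : M × G → K) (m, 1)
               map_add' := by
                 intro v w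
                 simp only [map_add]
                 show ∑ m : M, ((f.1 v : M × G → K) (m, 1) + (f.1 w : M × G → K) (m, 1)) = _
                 rw [Finset.sum_add_distrib]
               map_smul' := by
                 intro c v
                 simp only [map_smul]
                 show ∑ m : M, c * (f.1 v : M × G → K) (m, 1) = _
                 rw [← Finset.mul_sum]
                 rfl }
  map_add' f h := by
    ext v
    show ∑ m : M, ((f.1 + h.1) v : M × G → K) (m, 1) = _
    simp only [LinearMap.add_apply]
    show ∑ m : M, ((f.1 v : M × G → K) (m, 1) + (h.1 v : M × G → K) (m, 1)) = _
    rw [Finset.sum_add_distrib]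
    rfl
  map_smul' c f := by
    ext v
    show ∑ m : M, ((c • f.1) v : M × G → K) (m, 1) = _
    simp only [LinearMap.smul_apply]
    show ∑ m : M, c * (f.1 v : M × G → K) (m, 1) = _
    rw [← Finset.mul_sum]
    rfl

/-- The hom into the regular rep attached to a linear functional. -/
noncomputable def ofDual (V : AGRep K M G) (ψ : Module.Dual K V.carrier) :
    homSet V (regular K M G) :=
  ⟨{ toFun := fun v (p : M × G) => ψ (V.P p.1 (V.rho p.2⁻¹ v))
     map_add' := by intro v w; funext p; simp only [map_add]; rfl
     map_smul' := by intro c v; funext p; simp only [map_smul]; rfl },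
    by
      constructor
      · intro g v
        funext p
        show ψ (V.P p.1 (V.rho p.2⁻¹ (V.rho g v))) = ψ (V.P p.1 (V.rho (g⁻¹ * p.2)⁻¹ v))
        rw [mul_inv_rev, inv_inv, map_mul]
        rfl
      · intro n v
        funext p
        show ψ (V.P p.1 (V.rho p.2⁻¹ (V.P n v)))
          = if p.2 • p.1 = n then ψ (V.P p.1 (V.rho p.2⁻¹ v)) else 0
        have hc : V.rho p.2⁻¹ (V.P n v) = V.P (p.2⁻¹ • n) (V.rho p.2⁻¹ v) := by
          have := LinearMap.ext_iff.mp (V.compat p.2⁻¹ n) v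
          simpa [Module.End.mul_apply] using this
        rw [hc]
        by_cases hp : p.2 • p.1 = n
        · rw [if_pos hp]
          have he : p.2⁻¹ • n = p.1 := by rw [← hp, inv_smul_smul]
          rw [he]
          congr 1
          have := LinearMap.ext_iff.mp (V.proj_idem p.1) (V.rho p.2⁻¹ v)
          simpa [Module.End.mul_apply] using this
        · rw [if_neg hp]
          have hne : p.1 ≠ p.2⁻¹ • n := fun h => hp (by rw [h, smul_inv_smul])
          have := LinearMap.ext_iff.mp (V.proj_orth p.1 (p.2⁻¹ • n) hne) (V.rho p.2⁻¹ v)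
          simp only [Module.End.mul_apply, LinearMap.zero_apply] at this
          rw [this, map_zero]⟩

lemma recover (V : AGRep K M G) (f : V.carrier →ₗ[K] (regular K M G).carrier)
    (hf : f ∈ homSet V (regular K M G)) (v : V.carrier) (p : M × G) :
    (f v : M × G → K) p = ∑ m : M, (f (V.P p.1 (V.rho p.2⁻¹ v)) : M × G → K) (m, 1) := by
  obtain ⟨hf1, hf2⟩ := hf
  have key : ∀ m : M, (f (V.P p.1 (V.rho p.2⁻¹ v)) : M × G → K) (m, 1)
      = if m = p.1 then (f v : M × G → K) (m, p.2) else 0 := by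
    intro m
    rw [hf2, hf1]
    show (if ((1:G) • m : M) = p.1
        then ((regular K M G).rho p.2⁻¹ (f v) : M × G → K) (m, 1) else 0) = _
    rw [one_smul]
    by_cases hm : m = p.1
    · rw [if_pos hm, if_pos hm]
      show (f v : M × G → K) (m, (p.2⁻¹)⁻¹ * 1) = _
      rw [inv_inv, mul_one]
    · rw [if_neg hm, if_neg hm]
  rw [Finset.sum_congr rfl (fun m _ => key m)]
  rw [Finset.sum_ite_eq' Finset.univ p.1 (fun m => (f v : M × G → K) (m, p.2))]
  simp

lemma toDualMap_bijective (V : AGRep K M G) : Function.Bijective (toDualMap V) := by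
  constructor
  · rw [injective_iff_map_eq_zero]
    intro f hf
    have hf' : ∀ w : V.carrier, ∑ m : M, (f.1 w : M × G → K) (m, 1) = 0 := by
      intro w
      exact LinearMap.ext_iff.mp hf w
    apply Subtype.ext
    apply LinearMap.ext
    intro v
    funext p
    rw [recover V f.1 f.2 v p, hf']
    rfl
  · intro ψ
    refine ⟨ofDual V ψ, ?_⟩
    apply LinearMap.ext
    intro v
    show ∑ m : M, ψ (V.P m (V.rho (1 : G)⁻¹ v)) = ψ v
    simp only [inv_one, map_one, Module.End.one_apply]
    rw [← map_sum, ← LinearMap.sum_apply, V.proj_sum, Module.End.one_apply]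

lemma finrank_homSet_regular (V : AGRep K M G) :
    finrank K (homSet V (regular K M G)) = finrank K V.carrier := by
  rw [LinearEquiv.finrank_eq (LinearEquiv.ofBijective _ (toDualMap_bijective V)),
    Subspace.dual_finrank_eq]

end AGRep

namespace AGRep

open Module

lemma sub_P_coe (R : AGRep K M G) (U : Submodule K R.carrier) (hg) (hP) (m : M)
    (x : U) :
    ((R.sub U hg hP).P m x).1 = R.P m x.1 := rfl

lemma sub_rho_coe (R : AGRep K M G) (U : Submodule K R.carrier) (hg) (hP) (g : G)
    (x : U) :
    ((R.sub U hg hP).rho g x).1 = R.rho g x.1 := rfl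

/-- Transport of hom spaces along an isomorphism of targets. -/
lemma finrank_homSet_congr (V : AGRep K M G) {R S : AGRep K M G} (h : R.Iso S) :
    finrank K (homSet V R) = finrank K (homSet V S) := by
  obtain ⟨e, he1, he2⟩ := h
  have hsymm1 : ∀ (g : G) (w : S.carrier), e.symm (S.rho g w) = R.rho g (e.symm w) := by
    intro g w
    apply e.injective
    rw [he1, e.apply_symm_apply, e.apply_symm_apply]
  have hsymm2 : ∀ (m : M) (w : S.carrier), e.symm (S.P m w) = R.P m (e.symm w) := by
    intro m w
    apply e.injective
    rw [he2, e.apply_symm_apply, e.apply_symm_apply]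
  refine LinearEquiv.finrank_eq
    { toFun := fun f => ⟨e.toLinearMap ∘ₗ f.1, ?_, ?_⟩
      map_add' := by intro f h; apply Subtype.ext; apply LinearMap.ext; intro v; simp
      map_smul' := by intro c f; apply Subtype.ext; apply LinearMap.ext; intro v; simp
      invFun := fun f => ⟨e.symm.toLinearMap ∘ₗ f.1, ?_, ?_⟩
      left_inv := by
        intro f; apply Subtype.ext; apply LinearMap.ext; intro v
        simp
      right_inv := by
        intro f; apply Subtype.ext; apply LinearMap.ext; intro v
        simp }
  · intro g v
    simp only [LinearMap.comp_apply, LinearEquiv.coe_coe]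
    rw [f.2.1, he1]
  · intro m v
    simp only [LinearMap.comp_apply, LinearEquiv.coe_coe]
    rw [f.2.2, he2]
  · intro g v
    simp only [LinearMap.comp_apply, LinearEquiv.coe_coe]
    rw [f.2.1, hsymm1]
  · intro m v
    simp only [LinearMap.comp_apply, LinearEquiv.coe_coe]
    rw [f.2.2, hsymm2]

section Split

variable (V R : AGRep K M G) (U : Submodule K R.carrier)
variable (hg : ∀ g : G, U.map (R.rho g) ≤ U) (hP : ∀ m : M, U.map (R.P m) ≤ U)
variable (π : Module.End K R.carrier)

lemma finrank_homSet_split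
    (hπU : ∀ x ∈ U, π x = x) (hπmem : ∀ x, π x ∈ U)
    (hπg : ∀ g : G, R.rho g * π = π * R.rho g) (hπP : ∀ m : M, R.P m * π = π * R.P m)
    (hKg : ∀ g : G, (LinearMap.ker π).map (R.rho g) ≤ LinearMap.ker π)
    (hKP : ∀ m : M, (LinearMap.ker π).map (R.P m) ≤ LinearMap.ker π) :
    finrank K (homSet V R)
      = finrank K (homSet V (R.sub U hg hP))
        + finrank K (homSet V (R.sub (LinearMap.ker π) hKg hKP)) := by
  have hcg : ∀ (g : G) (x : R.carrier), π (R.rho g x) = R.rho g (π x) := by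
    intro g x
    have := LinearMap.ext_iff.mp (hπg g) x
    simp only [Module.End.mul_apply] at this
    exact (this).symm
  have hcP : ∀ (m : M) (x : R.carrier), π (R.P m x) = R.P m (π x) := by
    intro m x
    have := LinearMap.ext_iff.mp (hπP m) x
    simp only [Module.End.mul_apply] at this
    exact (this).symm
  have hfix : ∀ x : R.carrier, π (π x) = π x := fun x => hπU _ (hπmem x)
  have hker : ∀ x : R.carrier, ((1 : Module.End K R.carrier) - π) x ∈ LinearMap.ker π := by
    intro x
    simp only [LinearMap.mem_ker, LinearMap.sub_apply, Module.End.one_apply, map_sub]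
    rw [hfix, sub_self]
  set pU : R.carrier →ₗ[K] U := LinearMap.codRestrict U π hπmem with hpU
  set pK : R.carrier →ₗ[K] LinearMap.ker π :=
    LinearMap.codRestrict _ ((1 : Module.End K R.carrier) - π) hker with hpK
  have E : homSet V R ≃ₗ[K]
      (homSet V (R.sub U hg hP)) × (homSet V (R.sub (LinearMap.ker π) hKg hKP)) :=
    { toFun := fun f =>
        (⟨pU ∘ₗ f.1, by
          constructor
          · intro g v
            apply Subtype.ext
            erw [sub_rho_coe]
            show π (f.1 (V.rho g v)) = R.rho g (π (f.1 v))
            rw [f.2.1, hcg]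
          · intro m v
            apply Subtype.ext
            erw [sub_P_coe]
            show π (f.1 (V.P m v)) = R.P m (π (f.1 v))
            rw [f.2.2, hcP]⟩,
         ⟨pK ∘ₗ f.1, by
          constructor
          · intro g v
            apply Subtype.ext
            erw [sub_rho_coe]
            show f.1 (V.rho g v) - π (f.1 (V.rho g v)) = R.rho g (f.1 v - π (f.1 v))
            rw [f.2.1, hcg, map_sub]
          · intro m v
            apply Subtype.ext
            erw [sub_P_coe]
            show f.1 (V.P m v) - π (f.1 (V.P m v)) = R.P m (f.1 v - π (f.1 v))
            rw [f.2.2, hcP, map_sub]⟩)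
      map_add' := by
        intro f h
        refine Prod.ext ?_ ?_
        · apply Subtype.ext; apply LinearMap.ext; intro v; apply Subtype.ext
          exact congrArg Subtype.val (map_add pU (f.1 v) (h.1 v))
        · apply Subtype.ext; apply LinearMap.ext; intro v; apply Subtype.ext
          exact congrArg Subtype.val (map_add pK (f.1 v) (h.1 v))
      map_smul' := by
        intro c f
        refine Prod.ext ?_ ?_
        · apply Subtype.ext; apply LinearMap.ext; intro v; apply Subtype.ext
          exact congrArg Subtype.val (map_smul pU c (f.1 v))
        · apply Subtype.ext; apply LinearMap.ext; intro v; apply Subtype.ext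
          exact congrArg Subtype.val (map_smul pK c (f.1 v))
      invFun := fun fp =>
        ⟨U.subtype ∘ₗ fp.1.1 + (LinearMap.ker π).subtype ∘ₗ fp.2.1, by
          constructor
          · intro g v
            have e1 := congrArg Subtype.val (fp.1.2.1 g v)
            have e2 := congrArg Subtype.val (fp.2.2.1 g v)
            erw [sub_rho_coe] at e1
            erw [sub_rho_coe] at e2
            show Subtype.val (fp.1.1 (V.rho g v)) + Subtype.val (fp.2.1 (V.rho g v))
              = R.rho g (Subtype.val (fp.1.1 v) + Subtype.val (fp.2.1 v))
            rw [e1, e2, map_add]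
          · intro m v
            have e1 := congrArg Subtype.val (fp.1.2.2 m v)
            have e2 := congrArg Subtype.val (fp.2.2.2 m v)
            erw [sub_P_coe] at e1
            erw [sub_P_coe] at e2
            show Subtype.val (fp.1.1 (V.P m v)) + Subtype.val (fp.2.1 (V.P m v))
              = R.P m (Subtype.val (fp.1.1 v) + Subtype.val (fp.2.1 v))
            rw [e1, e2, map_add]⟩
      left_inv := by
        intro f
        apply Subtype.ext
        apply LinearMap.ext
        intro v
        show π (f.1 v) + (f.1 v - π (f.1 v)) = f.1 v
        abel
      right_inv := by
        intro fp
        refine Prod.ext ?_ ?_ <;>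
          (apply Subtype.ext; apply LinearMap.ext; intro v; apply Subtype.ext)
        · show π (Subtype.val (fp.1.1 v) + Subtype.val (fp.2.1 v)) = Subtype.val (fp.1.1 v)
          rw [map_add, hπU _ (fp.1.1 v).2, LinearMap.mem_ker.mp (fp.2.1 v).2, add_zero]
        · show (Subtype.val (fp.1.1 v) + Subtype.val (fp.2.1 v))
              - π (Subtype.val (fp.1.1 v) + Subtype.val (fp.2.1 v)) = Subtype.val (fp.2.1 v)
          rw [map_add, hπU _ (fp.1.1 v).2, LinearMap.mem_ker.mp (fp.2.1 v).2, add_zero]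
          abel }
  rw [LinearEquiv.finrank_eq E, Module.finrank_prod]

end Split

variable [Fintype G] [IsAlgClosed K] [CharZero K]

lemma key_induction {ι : Type} [Fintype ι] (V : ι → AGRep K M G)
    (hirr : ∀ i, (V i).Irreducible)
    (hdist : ∀ i j, i ≠ j → ¬ (V i).Iso (V j))
    (hcomp : ∀ W : AGRep K M G, W.Irreducible → ∃ i, W.Iso (V i)) :
    ∀ (n : ℕ) (R : AGRep K M G), finrank K R.carrier ≤ n →
      finrank K R.carrier
        = ∑ i : ι, finrank K (V i).carrier * finrank K (homSet (V i) R) := by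
  intro n
  induction n using Nat.strong_induction_on with
  | _ n IH =>
    intro R hR
    by_cases hnt : Nontrivial R.carrier
    · by_cases hRirr : R.Irreducible
      · obtain ⟨i0, hiso⟩ := hcomp R hRirr
        obtain ⟨e, he1, he2⟩ := hiso
        have hrk : finrank K R.carrier = finrank K (V i0).carrier := e.finrank_eq
        have hcongr : ∀ i, finrank K (homSet (V i) R) = finrank K (homSet (V i) (V i0)) :=
          fun i => finrank_homSet_congr (V i) ⟨e, he1, he2⟩
        rw [hrk]
        rw [Finset.sum_congr rfl (fun i _ => by rw [hcongr i])]
        rw [Finset.sum_eq_single i0]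
        · rw [finrank_homSet_self (hirr i0), mul_one]
        · intro i _ hne
          rw [homSet_eq_bot (hirr i) (hirr i0) (hdist i i0 hne)]
          simp
        · intro h
          exact absurd (Finset.mem_univ i0) h
      · have hex : ∃ U : Submodule K R.carrier,
            (∀ g : G, U.map (R.rho g) ≤ U) ∧ (∀ m : M, U.map (R.P m) ≤ U) ∧
            U ≠ ⊥ ∧ U ≠ ⊤ := by
          by_contra hcon
          push_neg at hcon
          exact hRirr ⟨hnt, fun U h1 h2 => by
            by_cases hb : U = ⊥
            · exact Or.inl hb
            · exact Or.inr (hcon U h1 h2 hb)⟩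
        obtain ⟨U, hgU, hPU, hUbot, hUtop⟩ := hex
        obtain ⟨π, hπU, hπmem, hπg, hπP⟩ := exists_proj R U hgU hPU
        have hKg : ∀ g : G, (LinearMap.ker π).map (R.rho g) ≤ LinearMap.ker π := by
          rintro g x ⟨y, hy, rfl⟩
          simp only [SetLike.mem_coe, LinearMap.mem_ker] at hy ⊢
          have := LinearMap.ext_iff.mp (hπg g) y
          simp only [Module.End.mul_apply] at this
          rw [← this, hy, map_zero]
        have hKP : ∀ m : M, (LinearMap.ker π).map (R.P m) ≤ LinearMap.ker π := by
          rintro m x ⟨y, hy, rfl⟩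
          simp only [SetLike.mem_coe, LinearMap.mem_ker] at hy ⊢
          have := LinearMap.ext_iff.mp (hπP m) y
          simp only [Module.End.mul_apply] at this
          rw [← this, hy, map_zero]
        have hrange : LinearMap.range π = U := by
          apply le_antisymm
          · rintro x ⟨y, rfl⟩
            exact hπmem y
          · intro x hx
            exact ⟨x, hπU x hx⟩
        have hsum : finrank K U + finrank K (LinearMap.ker π) = finrank K R.carrier := by
          rw [← hrange]
          exact LinearMap.finrank_range_add_finrank_ker π
        have hUlt : finrank K U < finrank K R.carrier :=
          Submodule.finrank_lt hUtop
        have hKtop : LinearMap.ker π ≠ ⊤ := by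
          intro hk
          obtain ⟨u, hu, hune⟩ := Submodule.exists_mem_ne_zero_of_ne_bot hUbot
          have : π u = 0 := LinearMap.mem_ker.mp (hk ▸ Submodule.mem_top)
          exact hune (by rw [← hπU u hu, this])
        have hKlt : finrank K (LinearMap.ker π) < finrank K R.carrier :=
          Submodule.finrank_lt hKtop
        have hS1 : finrank K (R.sub U hgU hPU).carrier = finrank K U := rfl
        have hS2 : finrank K (R.sub (LinearMap.ker π) hKg hKP).carrier
            = finrank K (LinearMap.ker π) := rfl
        have ih1 := IH (finrank K U) (lt_of_lt_of_le hUlt hR)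
          (R.sub U hgU hPU) (le_of_eq hS1)
        have ih2 := IH (finrank K (LinearMap.ker π)) (lt_of_lt_of_le hKlt hR)
          (R.sub (LinearMap.ker π) hKg hKP) (le_of_eq hS2)
        rw [hS1] at ih1
        rw [hS2] at ih2
        calc finrank K R.carrier
            = finrank K U + finrank K (LinearMap.ker π) := hsum.symm
          _ = ∑ i : ι, finrank K (V i).carrier * finrank K (homSet (V i) (R.sub U hgU hPU))
              + ∑ i : ι, finrank K (V i).carrier
                * finrank K (homSet (V i) (R.sub (LinearMap.ker π) hKg hKP)) := by
              rw [← ih1, ← ih2]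
          _ = ∑ i : ι, (finrank K (V i).carrier * finrank K (homSet (V i) (R.sub U hgU hPU))
              + finrank K (V i).carrier
                * finrank K (homSet (V i) (R.sub (LinearMap.ker π) hKg hKP))) := by
              rw [Finset.sum_add_distrib]
          _ = ∑ i : ι, finrank K (V i).carrier * finrank K (homSet (V i) R) := by
              refine Finset.sum_congr rfl (fun i _ => ?_)
              rw [← Nat.mul_add]
              rw [← finrank_homSet_split (V i) R U hgU hPU π hπU hπmem hπg hπP hKg hKP]
    · have hsub : Subsingleton R.carrier := not_nontrivial_iff_subsingleton.mp hnt
      have h0 : finrank K R.carrier = 0 := finrank_zero_of_subsingleton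
      rw [h0]
      symm
      rw [Finset.sum_eq_zero]
      intro i _
      haveI hss : Subsingleton ((V i).carrier →ₗ[K] R.carrier) :=
        ⟨fun f g => LinearMap.ext fun v => Subsingleton.elim _ _⟩
      haveI hss2 : Subsingleton (homSet (V i) R) :=
        ⟨fun f g => Subtype.ext (Subsingleton.elim _ _)⟩
      rw [show finrank K (homSet (V i) R) = 0 from finrank_zero_of_subsingleton,
        Nat.mul_zero]

end AGRep

/-- Burnside's theorem for action groupoids: if `(V_i)` is a complete set of
representatives of the isomorphism classes of irreducible representations of `M//G`
over an algebraically closed field of characteristic zero, with dimensions `d_i`,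
then `∑ d_i² = |M|·|G|`. -/
theorem agRep_sum_sq_dim [Fintype G] [IsAlgClosed K] [CharZero K]
    {ι : Type} [Fintype ι] (V : ι → AGRep K M G)
    (hirr : ∀ i, (V i).Irreducible)
    (hdist : ∀ i j, i ≠ j → ¬ (V i).Iso (V j))
    (hcomp : ∀ W : AGRep K M G, W.Irreducible → ∃ i, W.Iso (V i)) :
    ∑ i : ι, (Module.finrank K (V i).carrier) ^ 2
      = Fintype.card M * Fintype.card G := by
  have hkey := AGRep.key_induction V hirr hdist hcomp
    (Module.finrank K (AGRep.regular K M G).carrier) (AGRep.regular K M G) le_rfl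
  rw [AGRep.finrank_regular] at hkey
  calc ∑ i : ι, (Module.finrank K (V i).carrier) ^ 2
      = ∑ i : ι, Module.finrank K (V i).carrier
          * Module.finrank K (AGRep.homSet (V i) (AGRep.regular K M G)) := by
        refine Finset.sum_congr rfl (fun i _ => ?_)
        rw [AGRep.finrank_homSet_regular, sq]
    _ = Fintype.card M * Fintype.card G := hkey.symm
end

section
/- Let a finite group G act on a finite set M. The number of isomorphism classes of irreducible complex representations of the action groupoid M//G equals the number of G-orbits of the set A = {(m,g) ∈ M × G : g·m = m}, where G acts on A by h·(m,g) = (h·m, h g h⁻¹). -/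
open Finset

variable {K M G : Type} [Field K] [Fintype M] [Group G] [MulAction G M]

/-- The `G`-orbit relation on the set `A = {(m,g) : g·m = m}`, where `G` acts by
`h·(m,g) = (h·m, h g h⁻¹)`. -/
def fixRel (M G : Type) [Group G] [MulAction G M] :
    {p : M × G // p.2 • p.1 = p.1} → {p : M × G // p.2 • p.1 = p.1} → Prop :=
  fun a b => ∃ h : G, h • a.1.1 = b.1.1 ∧ h * a.1.2 * h⁻¹ = b.1.2


/-! ### Auxiliary development -/

noncomputable section
set_option linter.unusedSectionVars false
open scoped Classical
open LinearMap TensorProduct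

/-- The set of pairs `(m, g)` with `g • m = m`. -/
abbrev FixA (M G : Type) [Group G] [MulAction G M] : Type := {p : M × G // p.2 • p.1 = p.1}

/-- The `G`-action on `FixA M G`. -/
def actA (h : G) (a : FixA M G) : FixA M G :=
  ⟨(h • a.1.1, h * a.1.2 * h⁻¹), by
    have ha := a.2
    calc (h * a.1.2 * h⁻¹) • (h • a.1.1) = ((h * a.1.2 * h⁻¹) * h) • a.1.1 := by
          rw [smul_smul]
      _ = (h * a.1.2) • a.1.1 := by rw [inv_mul_cancel_right]
      _ = h • a.1.1 := by rw [mul_smul, ha]⟩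

lemma actA_actA (h h' : G) (a : FixA M G) : actA h (actA h' a) = actA (h * h') a := by
  apply Subtype.ext
  apply Prod.ext
  · simp [actA, mul_smul]
  · simp [actA, mul_assoc]

lemma actA_one (a : FixA M G) : actA 1 a = a := by
  apply Subtype.ext; apply Prod.ext <;> simp [actA]

/-- The action as an equivalence. -/
def equivA (h : G) : FixA M G ≃ FixA M G where
  toFun := actA h
  invFun := actA h⁻¹
  left_inv a := by rw [actA_actA, inv_mul_cancel, actA_one]
  right_inv a := by rw [actA_actA, mul_inv_cancel, actA_one]

/-- The operator `f ↦ a ∘ f ∘ b` on `Hom(V, W)`. -/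
def conjMap {V W : Type} [AddCommGroup V] [Module ℂ V] [AddCommGroup W] [Module ℂ W]
    (a : W →ₗ[ℂ] W) (b : V →ₗ[ℂ] V) : (V →ₗ[ℂ] W) →ₗ[ℂ] (V →ₗ[ℂ] W) where
  toFun f := a ∘ₗ f ∘ₗ b
  map_add' f g := by ext; simp
  map_smul' c f := by ext; simp

theorem trace_conjMap {V W : Type} [AddCommGroup V] [Module ℂ V] [FiniteDimensional ℂ V]
    [AddCommGroup W] [Module ℂ W] [FiniteDimensional ℂ W] (a : W →ₗ[ℂ] W) (b : V →ₗ[ℂ] V) :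
    trace ℂ _ (conjMap a b) = trace ℂ W a * trace ℂ V b := by
  set e := dualTensorHomEquiv ℂ V W
  have key : (conjMap a b) ∘ₗ (e : Module.Dual ℂ V ⊗[ℂ] W →ₗ[ℂ] (V →ₗ[ℂ] W))
      = (e : Module.Dual ℂ V ⊗[ℂ] W →ₗ[ℂ] (V →ₗ[ℂ] W)) ∘ₗ TensorProduct.map b.dualMap a := by
    apply TensorProduct.ext'
    intro φ w
    ext x
    simp [conjMap, e, dualTensorHomEquiv, dualTensorHomEquivOfBasis]
  have h2 : conjMap a b = e.conj (TensorProduct.map b.dualMap a) := by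
    apply LinearMap.ext; intro f
    obtain ⟨t, rfl⟩ := e.surjective f
    have := congrFun (congrArg (fun (F : _ →ₗ[ℂ] _) => (F : _ → _)) key) t
    simpa [LinearEquiv.conj_apply] using this
  have hdm : b.dualMap = Module.Dual.transpose (R := ℂ) b := rfl
  rw [h2, trace_conj', trace_tensorProduct', hdm, trace_transpose', mul_comm]

namespace AGRep

variable (R S : AGRep ℂ M G)

lemma rho_mul_inv (g : G) : R.rho g * R.rho g⁻¹ = 1 := by
  rw [← map_mul, mul_inv_cancel, map_one]

lemma rho_inv_mul (g : G) : R.rho g⁻¹ * R.rho g = 1 := by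
  rw [← map_mul, inv_mul_cancel, map_one]

lemma P_mul_rho (m : M) (g : G) : R.P m * R.rho g = R.rho g * R.P (g⁻¹ • m) := by
  have h := (R.compat g (g⁻¹ • m)).symm
  rwa [smul_inv_smul] at h

/-- The character of `R` at `(m, g)`. -/
def char_s18 (m : M) (g : G) : ℂ := trace ℂ R.carrier (R.P m * R.rho g)

lemma char_conj (h : G) (m : M) (g : G) :
    R.char_s18 (h • m) (h * g * h⁻¹) = R.char_s18 m g := by
  simp only [char_s18]
  have key : R.P (h • m) * R.rho (h * g * h⁻¹) = (R.rho h * R.P m * R.rho g) * R.rho h⁻¹ := by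
    rw [map_mul, map_mul]
    calc R.P (h • m) * (R.rho h * R.rho g * R.rho h⁻¹)
        = (R.P (h • m) * R.rho h) * R.rho g * R.rho h⁻¹ := by noncomm_ring
      _ = (R.rho h * R.P m) * R.rho g * R.rho h⁻¹ := by rw [← R.compat h m]
      _ = (R.rho h * R.P m * R.rho g) * R.rho h⁻¹ := by noncomm_ring
  rw [key, trace_mul_comm]
  have key2 : R.rho h⁻¹ * (R.rho h * R.P m * R.rho g) = R.P m * R.rho g := by
    calc R.rho h⁻¹ * (R.rho h * R.P m * R.rho g)
        = (R.rho h⁻¹ * R.rho h) * (R.P m * R.rho g) := by noncomm_ring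
      _ = R.P m * R.rho g := by rw [rho_inv_mul, one_mul]
  rw [key2]

lemma char_eq_zero {m : M} {g : G} (hgm : g • m ≠ m) : R.char_s18 m g = 0 := by
  have hne : g⁻¹ • m ≠ m := by
    intro h
    have h2 := congrArg (fun z => g • z) h
    simp only [smul_inv_smul] at h2
    exact hgm h2.symm
  simp only [char_s18]
  have e1 : R.P m * R.rho g = (R.P m * R.rho g) * R.P (g⁻¹ • m) := by
    calc R.P m * R.rho g = (R.P m * R.P m) * R.rho g := by rw [R.proj_idem]
      _ = R.P m * (R.P m * R.rho g) := by noncomm_ring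
      _ = R.P m * (R.rho g * R.P (g⁻¹ • m)) := by rw [R.P_mul_rho]
      _ = (R.P m * R.rho g) * R.P (g⁻¹ • m) := by noncomm_ring
  rw [e1, trace_mul_comm]
  have e2 : R.P (g⁻¹ • m) * (R.P m * R.rho g) = 0 := by
    calc R.P (g⁻¹ • m) * (R.P m * R.rho g)
        = (R.P (g⁻¹ • m) * R.P m) * R.rho g := by noncomm_ring
      _ = 0 * R.rho g := by rw [R.proj_orth _ _ hne]
      _ = 0 := by rw [zero_mul]
  rw [e2, map_zero]

/-- The space of intertwiners between two representations. -/
def homMG : Submodule ℂ (R.carrier →ₗ[ℂ] S.carrier) where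
  carrier := {f | (∀ g : G, S.rho g ∘ₗ f = f ∘ₗ R.rho g) ∧ ∀ m : M, S.P m ∘ₗ f = f ∘ₗ R.P m}
  add_mem' := by
    rintro f g ⟨hf1, hf2⟩ ⟨hg1, hg2⟩
    exact ⟨fun x => by rw [comp_add, add_comp, hf1 x, hg1 x],
      fun m => by rw [comp_add, add_comp, hf2 m, hg2 m]⟩
  zero_mem' := ⟨fun g => by simp, fun m => by simp⟩
  smul_mem' := by
    rintro c f ⟨hf1, hf2⟩
    exact ⟨fun x => by rw [comp_smul, smul_comp, hf1 x],
      fun m => by rw [comp_smul, smul_comp, hf2 m]⟩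

lemma mem_homMG {f : R.carrier →ₗ[ℂ] S.carrier} :
    f ∈ homMG R S ↔ ((∀ g : G, S.rho g ∘ₗ f = f ∘ₗ R.rho g) ∧
      ∀ m : M, S.P m ∘ₗ f = f ∘ₗ R.P m) := Iff.rfl

lemma id_mem_homMG : (LinearMap.id : R.carrier →ₗ[ℂ] R.carrier) ∈ homMG R R :=
  ⟨fun g => by simp, fun m => by simp⟩

/-- Schur's lemma, first form. -/
lemma schur_zero_or_bij (hR : R.Irreducible) (hS : S.Irreducible)
    {f : R.carrier →ₗ[ℂ] S.carrier} (hf : f ∈ homMG R S) :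
    f = 0 ∨ Function.Bijective f := by
  by_cases h0 : f = 0
  · exact Or.inl h0
  right
  have hker : LinearMap.ker f = ⊥ := by
    have c1 : ∀ g : G, (LinearMap.ker f).map (R.rho g) ≤ LinearMap.ker f := by
      intro g
      rintro y ⟨x, hx, rfl⟩
      have hgf := DFunLike.congr_fun (hf.1 g) x
      simp only [comp_apply] at hgf
      simp only [SetLike.mem_coe, LinearMap.mem_ker] at hx ⊢
      rw [← hgf, hx, map_zero]
    have c2 : ∀ m : M, (LinearMap.ker f).map (R.P m) ≤ LinearMap.ker f := by
      intro m
      rintro y ⟨x, hx, rfl⟩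
      have hgf := DFunLike.congr_fun (hf.2 m) x
      simp only [comp_apply] at hgf
      simp only [SetLike.mem_coe, LinearMap.mem_ker] at hx ⊢
      rw [← hgf, hx, map_zero]
    rcases hR.2 (LinearMap.ker f) c1 c2 with h | h
    · exact h
    · exact absurd (LinearMap.ker_eq_top.mp h) h0
  have hrange : LinearMap.range f = ⊤ := by
    have c1 : ∀ g : G, (LinearMap.range f).map (S.rho g) ≤ LinearMap.range f := by
      intro g
      rintro y ⟨x, hx, rfl⟩
      simp only [SetLike.mem_coe, LinearMap.mem_range] at hx ⊢
      obtain ⟨z, rfl⟩ := hx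
      have hgf := DFunLike.congr_fun (hf.1 g) z
      simp only [comp_apply] at hgf
      exact ⟨R.rho g z, hgf.symm⟩
    have c2 : ∀ m : M, (LinearMap.range f).map (S.P m) ≤ LinearMap.range f := by
      intro m
      rintro y ⟨x, hx, rfl⟩
      simp only [SetLike.mem_coe, LinearMap.mem_range] at hx ⊢
      obtain ⟨z, rfl⟩ := hx
      have hgf := DFunLike.congr_fun (hf.2 m) z
      simp only [comp_apply] at hgf
      exact ⟨R.P m z, hgf.symm⟩
    rcases hS.2 (LinearMap.range f) c1 c2 with h | h
    · exact absurd (LinearMap.range_eq_bot.mp h) h0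
    · exact h
  exact ⟨LinearMap.ker_eq_bot.mp hker, LinearMap.range_eq_top.mp hrange⟩

lemma iso_of_homMG (hR : R.Irreducible) (hS : S.Irreducible)
    {f : R.carrier →ₗ[ℂ] S.carrier} (hf : f ∈ homMG R S) (hne : f ≠ 0) : R.Iso S := by
  rcases schur_zero_or_bij R S hR hS hf with h | hbij
  · exact absurd h hne
  refine ⟨LinearEquiv.ofBijective f hbij, fun g v => ?_, fun m v => ?_⟩
  · have hgf := DFunLike.congr_fun (hf.1 g) v
    simp only [comp_apply] at hgf
    simpa using hgf.symm
  · have hgf := DFunLike.congr_fun (hf.2 m) v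
    simp only [comp_apply] at hgf
    simpa using hgf.symm

/-- Schur's lemma: endomorphisms of an irreducible are scalars. -/
lemma homMG_self_eq_span (hR : R.Irreducible) :
    homMG R R = Submodule.span ℂ {(LinearMap.id : R.carrier →ₗ[ℂ] R.carrier)} := by
  apply le_antisymm
  · intro f hf
    haveI := hR.1
    obtain ⟨μ, hμ⟩ := Module.End.exists_eigenvalue (f : Module.End ℂ R.carrier)
    obtain ⟨x, hx⟩ := hμ.exists_hasEigenvector
    set g0 : R.carrier →ₗ[ℂ] R.carrier := f - μ • LinearMap.id with hg0
    have hg : g0 ∈ homMG R R :=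
      sub_mem hf (Submodule.smul_mem _ μ (id_mem_homMG R))
    rcases schur_zero_or_bij R R hR hR hg with h | h
    · have hfμ : f = μ • LinearMap.id := by
        have : f - μ • LinearMap.id = 0 := h
        rwa [sub_eq_zero] at this
      rw [hfμ]
      exact Submodule.smul_mem _ _ (Submodule.mem_span_singleton_self _)
    · exfalso
      have hx0 : g0 x = 0 := by
        rw [hg0]
        simp only [LinearMap.sub_apply, LinearMap.smul_apply, LinearMap.id_apply]
        rw [hx.apply_eq_smul, sub_self]
      have hinj := h.injective (show g0 x = g0 0 by rw [hx0, map_zero])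
      exact hx.right hinj
  · rw [Submodule.span_le, Set.singleton_subset_iff]
    exact id_mem_homMG R

lemma finrank_homMG_self (hR : R.Irreducible) :
    Module.finrank ℂ (homMG R R) = 1 := by
  rw [homMG_self_eq_span R hR]
  apply finrank_span_singleton
  haveI := hR.1
  obtain ⟨x, hx⟩ := exists_ne (0 : R.carrier)
  intro h
  exact hx (by simpa using DFunLike.congr_fun h x)

lemma projA (g : G) (m n : M) :
    S.P n * (S.rho g * S.P m) = if m = g⁻¹ • n then S.rho g * S.P m else 0 := by
  have key : S.P n * (S.rho g * S.P m) = S.rho g * (S.P (g⁻¹ • n) * S.P m) := by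
    calc S.P n * (S.rho g * S.P m) = (S.P n * S.rho g) * S.P m := by noncomm_ring
      _ = (S.rho g * S.P (g⁻¹ • n)) * S.P m := by rw [S.P_mul_rho]
      _ = S.rho g * (S.P (g⁻¹ • n) * S.P m) := by noncomm_ring
  rw [key]
  by_cases hc : m = g⁻¹ • n
  · rw [if_pos hc, hc, S.proj_idem]
  · rw [if_neg hc, S.proj_orth _ _ (fun hh => hc hh.symm), mul_zero]

lemma projB (g : G) (m n : M) :
    (R.P m * R.rho g⁻¹) * R.P n = if m = g⁻¹ • n then R.P m * R.rho g⁻¹ else 0 := by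
  have key : (R.P m * R.rho g⁻¹) * R.P n = (R.P m * R.P (g⁻¹ • n)) * R.rho g⁻¹ := by
    calc (R.P m * R.rho g⁻¹) * R.P n = R.P m * (R.rho g⁻¹ * R.P n) := by noncomm_ring
      _ = R.P m * (R.P (g⁻¹ • n) * R.rho g⁻¹) := by rw [R.compat g⁻¹ n]
      _ = (R.P m * R.P (g⁻¹ • n)) * R.rho g⁻¹ := by noncomm_ring
  rw [key]
  by_cases hc : m = g⁻¹ • n
  · rw [if_pos hc, hc, R.proj_idem]
  · rw [if_neg hc, R.proj_orth _ _ hc, zero_mul]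

variable [Fintype G]

/-- The averaging operator on `Hom(R, S)`. -/
def Phi : (R.carrier →ₗ[ℂ] S.carrier) →ₗ[ℂ] (R.carrier →ₗ[ℂ] S.carrier) :=
  ∑ g : G, ∑ m : M, conjMap (S.rho g * S.P m) (R.P m * R.rho g⁻¹)

lemma Phi_apply (f : R.carrier →ₗ[ℂ] S.carrier) (x : R.carrier) :
    Phi R S f x = ∑ g : G, ∑ m : M,
      (S.rho g * S.P m) (f ((R.P m * R.rho g⁻¹) x)) := by
  simp [Phi, LinearMap.sum_apply, conjMap]

lemma Phi_mem (f : R.carrier →ₗ[ℂ] S.carrier) : Phi R S f ∈ homMG R S := by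
  constructor
  · intro h
    ext x
    simp only [comp_apply, Phi_apply, map_sum]
    refine Fintype.sum_equiv (Equiv.mulLeft h) _ _ (fun g => ?_)
    refine Finset.sum_congr rfl (fun m _ => ?_)
    have harg : (R.P m * R.rho (Equiv.mulLeft h g)⁻¹) (R.rho h x) = (R.P m * R.rho g⁻¹) x := by
      have h1 : (R.P m * R.rho (h * g)⁻¹) * R.rho h = R.P m * R.rho g⁻¹ := by
        rw [mul_assoc, ← map_mul, mul_inv_rev, inv_mul_cancel_right]
      calc (R.P m * R.rho (Equiv.mulLeft h g)⁻¹) (R.rho h x)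
          = ((R.P m * R.rho (h * g)⁻¹) * R.rho h) x := rfl
        _ = (R.P m * R.rho g⁻¹) x := by rw [h1]
    rw [harg]
    calc S.rho h ((S.rho g * S.P m) (f ((R.P m * R.rho g⁻¹) x)))
        = (S.rho h * (S.rho g * S.P m)) (f ((R.P m * R.rho g⁻¹) x)) := rfl
      _ = (S.rho (Equiv.mulLeft h g) * S.P m) (f ((R.P m * R.rho g⁻¹) x)) := by
          rw [← mul_assoc, ← map_mul]; rfl
  · intro n
    ext x
    simp only [comp_apply, Phi_apply, map_sum]
    refine Finset.sum_congr rfl (fun g _ => Finset.sum_congr rfl (fun m _ => ?_))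
    have h1 := projA S g m n
    have h2 := projB R g m n
    by_cases hc : m = g⁻¹ • n
    · rw [if_pos hc] at h1 h2
      calc S.P n ((S.rho g * S.P m) (f ((R.P m * R.rho g⁻¹) x)))
          = (S.P n * (S.rho g * S.P m)) (f ((R.P m * R.rho g⁻¹) x)) := rfl
        _ = (S.rho g * S.P m) (f ((R.P m * R.rho g⁻¹) x)) := by rw [h1]
        _ = (S.rho g * S.P m) (f (((R.P m * R.rho g⁻¹) * R.P n) x)) := by rw [h2]
        _ = (S.rho g * S.P m) (f ((R.P m * R.rho g⁻¹) (R.P n x))) := rfl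
    · rw [if_neg hc] at h1 h2
      have l1 : S.P n ((S.rho g * S.P m) (f ((R.P m * R.rho g⁻¹) x))) = 0 := by
        show (S.P n * (S.rho g * S.P m)) (f ((R.P m * R.rho g⁻¹) x)) = 0
        rw [h1, LinearMap.zero_apply]
      have l2 : (R.P m * R.rho g⁻¹) (R.P n x) = 0 := by
        show ((R.P m * R.rho g⁻¹) * R.P n) x = 0
        rw [h2, LinearMap.zero_apply]
      rw [l1, l2, map_zero, map_zero]

lemma Phi_fixed {f : R.carrier →ₗ[ℂ] S.carrier} (hf : f ∈ homMG R S) :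
    Phi R S f = (Fintype.card G : ℂ) • f := by
  have hP : ∀ (m : M) (y : R.carrier), f (R.P m y) = S.P m (f y) := by
    intro m y
    have h := DFunLike.congr_fun (hf.2 m) y
    simp only [comp_apply] at h
    exact h.symm
  have hRho : ∀ (g : G) (y : R.carrier), S.rho g (f y) = f (R.rho g y) := by
    intro g y
    have h := DFunLike.congr_fun (hf.1 g) y
    simp only [comp_apply] at h
    exact h
  ext x
  rw [Phi_apply]
  have hterm : ∀ g : G, ∑ m : M, (S.rho g * S.P m) (f ((R.P m * R.rho g⁻¹) x)) = f x := by
    intro g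
    have e1 : ∀ m : M, (S.rho g * S.P m) (f ((R.P m * R.rho g⁻¹) x))
        = S.rho g (S.P m (f (R.rho g⁻¹ x))) := by
      intro m
      have hcollapse : (S.rho g * S.P m) * S.P m = S.rho g * S.P m := by
        rw [mul_assoc, S.proj_idem]
      calc (S.rho g * S.P m) (f ((R.P m * R.rho g⁻¹) x))
          = (S.rho g * S.P m) (f (R.P m (R.rho g⁻¹ x))) := rfl
        _ = (S.rho g * S.P m) (S.P m (f (R.rho g⁻¹ x))) := by rw [hP m]
        _ = ((S.rho g * S.P m) * S.P m) (f (R.rho g⁻¹ x)) := rfl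
        _ = (S.rho g * S.P m) (f (R.rho g⁻¹ x)) := by rw [hcollapse]
        _ = S.rho g (S.P m (f (R.rho g⁻¹ x))) := rfl
    calc ∑ m : M, (S.rho g * S.P m) (f ((R.P m * R.rho g⁻¹) x))
        = ∑ m : M, S.rho g (S.P m (f (R.rho g⁻¹ x))) :=
          Finset.sum_congr rfl (fun m _ => e1 m)
      _ = S.rho g (∑ m : M, S.P m (f (R.rho g⁻¹ x))) := (map_sum _ _ _).symm
      _ = S.rho g ((∑ m : M, S.P m) (f (R.rho g⁻¹ x))) := by rw [LinearMap.sum_apply]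
      _ = S.rho g (f (R.rho g⁻¹ x)) := by rw [S.proj_sum, Module.End.one_apply]
      _ = f (R.rho g (R.rho g⁻¹ x)) := hRho g _
      _ = f x := by rw [← Module.End.mul_apply, R.rho_mul_inv, Module.End.one_apply]
  rw [Finset.sum_congr rfl (fun g _ => hterm g), Finset.sum_const, Finset.card_univ]
  rw [LinearMap.smul_apply, Nat.cast_smul_eq_nsmul]

lemma trace_Phi :
    trace ℂ _ (Phi R S) = ∑ g : G, ∑ m : M, S.char_s18 m g * R.char_s18 m g⁻¹ := by
  simp only [Phi, map_sum, trace_conjMap]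
  refine Finset.sum_congr rfl (fun g _ => Finset.sum_congr rfl (fun m _ => ?_))
  rw [char_s18, char_s18, trace_mul_comm]

lemma trace_Phi_eq_finrank :
    trace ℂ _ (Phi R S) = (Fintype.card G : ℂ) * (Module.finrank ℂ (homMG R S) : ℂ) := by
  have hcard : (Fintype.card G : ℂ) ≠ 0 := Nat.cast_ne_zero.mpr Fintype.card_ne_zero
  have hproj : IsProj (homMG R S) ((Fintype.card G : ℂ)⁻¹ • Phi R S) := by
    constructor
    · intro x
      exact Submodule.smul_mem _ _ (Phi_mem R S x)
    · intro x hx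
      rw [LinearMap.smul_apply, Phi_fixed R S hx, smul_smul, inv_mul_cancel₀ hcard, one_smul]
  have htr := hproj.trace
  rw [map_smul, smul_eq_mul] at htr
  calc trace ℂ _ (Phi R S)
      = (Fintype.card G : ℂ) * ((Fintype.card G : ℂ)⁻¹ * trace ℂ _ (Phi R S)) := by
        rw [← mul_assoc, mul_inv_cancel₀ hcard, one_mul]
    _ = (Fintype.card G : ℂ) * (Module.finrank ℂ (homMG R S) : ℂ) := by rw [htr]

end AGRep

section Main

variable [Fintype G]

/-- The `T`-operator attached to a function on `FixA`. -/
def Tmap (R : AGRep ℂ M G) (f : FixA M G → ℂ) : Module.End ℂ R.carrier :=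
  ∑ a : FixA M G, f a • (R.rho a.1.2 * R.P a.1.1)

/-- Class functions on `FixA M G`. -/
def classFun : Submodule ℂ (FixA M G → ℂ) where
  carrier := {f | ∀ (h : G) (a : FixA M G), f (actA h a) = f a}
  add_mem' := by
    intro f g hf hg h a
    simp only [Pi.add_apply, hf h a, hg h a]
  zero_mem' := by intro h a; rfl
  smul_mem' := by
    intro c f hf h a
    simp only [Pi.smul_apply, hf h a]

lemma trace_Tmap (R : AGRep ℂ M G) (f : FixA M G → ℂ) :
    trace ℂ R.carrier (Tmap R f) = ∑ a : FixA M G, f a * R.char_s18 a.1.1 a.1.2 := by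
  simp only [Tmap, map_sum, map_smul, smul_eq_mul]
  refine Finset.sum_congr rfl (fun a _ => ?_)
  congr 1
  rw [AGRep.char_s18, trace_mul_comm]

lemma Tmap_mem (R : AGRep ℂ M G) {f : FixA M G → ℂ} (hf : f ∈ classFun (M := M) (G := G)) :
    (Tmap R f : R.carrier →ₗ[ℂ] R.carrier) ∈ AGRep.homMG R R := by
  constructor
  · intro h
    ext x
    simp only [comp_apply, Tmap, LinearMap.sum_apply, LinearMap.smul_apply, map_sum, map_smul]
    refine Fintype.sum_equiv (equivA h) _ _ (fun a => ?_)
    obtain ⟨⟨m, g⟩, ha⟩ := a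
    have key : (R.rho (h * g * h⁻¹) * R.P (h • m)) * R.rho h = R.rho h * (R.rho g * R.P m) := by
      calc (R.rho (h * g * h⁻¹) * R.P (h • m)) * R.rho h
          = R.rho (h * g * h⁻¹) * (R.P (h • m) * R.rho h) := by noncomm_ring
        _ = R.rho (h * g * h⁻¹) * (R.rho h * R.P m) := by rw [← R.compat h m]
        _ = (R.rho (h * g * h⁻¹) * R.rho h) * R.P m := by noncomm_ring
        _ = R.rho (h * g * h⁻¹ * h) * R.P m := by rw [← map_mul]
        _ = R.rho (h * g) * R.P m := by rw [inv_mul_cancel_right]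
        _ = (R.rho h * R.rho g) * R.P m := by rw [map_mul]
        _ = R.rho h * (R.rho g * R.P m) := by noncomm_ring
    have hfa := hf h ⟨(m, g), ha⟩
    calc f ⟨(m, g), ha⟩ • R.rho h ((R.rho g * R.P m) x)
        = f ⟨(m, g), ha⟩ • (R.rho h * (R.rho g * R.P m)) x := rfl
      _ = f ⟨(m, g), ha⟩ • ((R.rho (h * g * h⁻¹) * R.P (h • m)) * R.rho h) x := by rw [key]
      _ = f (actA h ⟨(m, g), ha⟩) • (R.rho (h * g * h⁻¹) * R.P (h • m)) (R.rho h x) := by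
          rw [hfa]; rfl
  · intro n
    have key : ∀ a : FixA M G,
        R.P n * (R.rho a.1.2 * R.P a.1.1) = (R.rho a.1.2 * R.P a.1.1) * R.P n := by
      rintro ⟨⟨m, g⟩, ha⟩
      simp only at ha ⊢
      have h1 : R.P n * (R.rho g * R.P m) = R.rho g * (R.P (g⁻¹ • n) * R.P m) := by
        calc R.P n * (R.rho g * R.P m) = (R.P n * R.rho g) * R.P m := by noncomm_ring
          _ = (R.rho g * R.P (g⁻¹ • n)) * R.P m := by rw [R.P_mul_rho]
          _ = R.rho g * (R.P (g⁻¹ • n) * R.P m) := by noncomm_ring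
      have h2 : (R.rho g * R.P m) * R.P n = R.rho g * (R.P m * R.P n) := by noncomm_ring
      by_cases hnm : n = m
      · subst hnm
        have hfix : g⁻¹ • n = n := by
          conv_lhs => rw [← ha]
          rw [inv_smul_smul]
        rw [h1, h2, hfix, R.proj_idem]
      · have hne1 : g⁻¹ • n ≠ m := by
          intro hcontra
          have hn : n = g • m := by rw [← hcontra, smul_inv_smul]
          exact hnm (hn.trans ha)
        rw [h1, h2, R.proj_orth _ _ hne1, R.proj_orth _ _ (fun hh => hnm hh.symm)]
    ext x
    simp only [comp_apply, Tmap, LinearMap.sum_apply, LinearMap.smul_apply, map_sum, map_smul]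
    refine Finset.sum_congr rfl (fun a _ => ?_)
    congr 1
    show (R.P n * (R.rho a.1.2 * R.P a.1.1)) x = ((R.rho a.1.2 * R.P a.1.1) * R.P n) x
    rw [key a]

/-- A subrepresentation. -/
def subAGRep (R : AGRep ℂ M G) (U : Submodule ℂ R.carrier)
    (hg : ∀ g : G, U.map (R.rho g) ≤ U) (hp : ∀ m : M, U.map (R.P m) ≤ U) :
    AGRep ℂ M G where
  carrier := U
  P m := (R.P m).restrict (fun x hx => hp m ⟨x, hx, rfl⟩)
  rho := {
    toFun := fun g => (R.rho g).restrict (fun x hx => hg g ⟨x, hx, rfl⟩)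
    map_one' := by ext x; simp [LinearMap.restrict_apply]
    map_mul' := by intro g h; ext x; simp [LinearMap.restrict_apply] }
  proj_idem := by
    intro m; ext x
    have h := DFunLike.congr_fun (R.proj_idem m) (x : R.carrier)
    simp only [Module.End.mul_apply, LinearMap.restrict_coe_apply] at h ⊢
    exact h
  proj_orth := by
    intro m n hmn; ext x
    have h := DFunLike.congr_fun (R.proj_orth m n hmn) (x : R.carrier)
    simp only [Module.End.mul_apply, LinearMap.zero_apply] at h
    simp only [Module.End.mul_apply, LinearMap.restrict_coe_apply, LinearMap.zero_apply,
      ZeroMemClass.coe_zero]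
    exact h
  proj_sum := by
    ext x
    have h := DFunLike.congr_fun R.proj_sum (x : R.carrier)
    simp only [LinearMap.sum_apply, Module.End.one_apply] at h
    simp only [LinearMap.sum_apply, Module.End.one_apply]
    rw [AddSubmonoidClass.coe_finset_sum]
    simp only [LinearMap.restrict_coe_apply]
    exact h
  compat := by
    intro g m; ext x
    have h := DFunLike.congr_fun (R.compat g m) (x : R.carrier)
    simp only [Module.End.mul_apply] at h
    simp only [Module.End.mul_apply, LinearMap.restrict_coe_apply]
    exact h

lemma Tmap_subAGRep (R : AGRep ℂ M G) (U : Submodule ℂ R.carrier)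
    (hg : ∀ g : G, U.map (R.rho g) ≤ U) (hp : ∀ m : M, U.map (R.P m) ≤ U)
    (f : FixA M G → ℂ) (x : U) :
    U.subtype (Tmap (subAGRep R U hg hp) f x) = Tmap R f (x : R.carrier) := by
  simp only [Tmap, map_sum, map_smul, LinearMap.sum_apply, LinearMap.smul_apply]
  erw [LinearMap.sum_apply, map_sum]
  refine Finset.sum_congr rfl (fun a _ => ?_)
  rfl

lemma Tmap_iso {R S : AGRep ℂ M G} (hiso : R.Iso S) (f : FixA M G → ℂ)
    (h : Tmap S f = 0) : Tmap R f = 0 := by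
  obtain ⟨e, he1, he2⟩ := hiso
  ext x
  have key : e (Tmap R f x) = Tmap S f (e x) := by
    simp only [Tmap, LinearMap.sum_apply, LinearMap.smul_apply, map_sum, map_smul]
    refine Finset.sum_congr rfl (fun a _ => ?_)
    congr 1
    calc e ((R.rho a.1.2 * R.P a.1.1) x) = e (R.rho a.1.2 (R.P a.1.1 x)) := rfl
      _ = S.rho a.1.2 (e (R.P a.1.1 x)) := he1 _ _
      _ = S.rho a.1.2 (S.P a.1.1 (e x)) := by rw [he2]
      _ = (S.rho a.1.2 * S.P a.1.1) (e x) := rfl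
  rw [h] at key
  simp only [LinearMap.zero_apply] at key
  have hinj := e.injective (show e (Tmap R f x) = e 0 by rw [key, map_zero])
  simp only [LinearMap.zero_apply]
  exact hinj

/-- Maschke-type theorem for `AGRep`. -/
lemma maschke (R : AGRep ℂ M G) (U : Submodule ℂ R.carrier)
    (hg : ∀ g : G, U.map (R.rho g) ≤ U) (hp : ∀ m : M, U.map (R.P m) ≤ U) :
    ∃ U' : Submodule ℂ R.carrier, (∀ g : G, U'.map (R.rho g) ≤ U') ∧
      (∀ m : M, U'.map (R.P m) ≤ U') ∧ IsCompl U U' := by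
  obtain ⟨W, hW⟩ := Submodule.exists_isCompl U
  set p0 : R.carrier →ₗ[ℂ] R.carrier := U.subtype ∘ₗ (U.projectionOnto W hW) with hp0
  have hp0mem : ∀ x, p0 x ∈ U := fun x => (U.projectionOnto W hW x).2
  have hp0fix : ∀ x ∈ U, p0 x = x := by
    intro x hx
    have := Submodule.linearProjOfIsCompl_apply_left hW ⟨x, hx⟩
    simp only [hp0, comp_apply, Submodule.coe_subtype]
    rw [this]
  have hcard : (Fintype.card G : ℂ) ≠ 0 := Nat.cast_ne_zero.mpr Fintype.card_ne_zero
  set π : R.carrier →ₗ[ℂ] R.carrier := (Fintype.card G : ℂ)⁻¹ • (AGRep.Phi R R p0) with hπ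
  have hmem : AGRep.Phi R R p0 ∈ AGRep.homMG R R := AGRep.Phi_mem R R p0
  have hπmem : ∀ x, π x ∈ U := by
    intro x
    rw [hπ, LinearMap.smul_apply]
    refine Submodule.smul_mem _ _ ?_
    rw [AGRep.Phi_apply]
    refine Submodule.sum_mem _ (fun g _ => Submodule.sum_mem _ (fun m _ => ?_))
    have h1 : p0 ((R.P m * R.rho g⁻¹) x) ∈ U := hp0mem _
    have h2 : R.P m (p0 ((R.P m * R.rho g⁻¹) x)) ∈ U := hp m ⟨_, h1, rfl⟩
    have h3 : R.rho g (R.P m (p0 ((R.P m * R.rho g⁻¹) x))) ∈ U := hg g ⟨_, h2, rfl⟩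
    exact h3
  have hπfix : ∀ x ∈ U, π x = x := by
    intro x hx
    rw [hπ, LinearMap.smul_apply]
    have hfix : AGRep.Phi R R p0 x = (Fintype.card G : ℂ) • x := by
      rw [AGRep.Phi_apply]
      have hterm : ∀ g : G, ∑ m : M, (R.rho g * R.P m) (p0 ((R.P m * R.rho g⁻¹) x)) = x := by
        intro g
        have hgx : R.rho g⁻¹ x ∈ U := hg g⁻¹ ⟨x, hx, rfl⟩
        have e1 : ∀ m : M, (R.rho g * R.P m) (p0 ((R.P m * R.rho g⁻¹) x))
            = R.rho g (R.P m (R.rho g⁻¹ x)) := by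
          intro m
          have hPm : R.P m (R.rho g⁻¹ x) ∈ U := hp m ⟨_, hgx, rfl⟩
          calc (R.rho g * R.P m) (p0 ((R.P m * R.rho g⁻¹) x))
              = R.rho g (R.P m (p0 (R.P m (R.rho g⁻¹ x)))) := rfl
            _ = R.rho g (R.P m (R.P m (R.rho g⁻¹ x))) := by rw [hp0fix _ hPm]
            _ = R.rho g ((R.P m * R.P m) (R.rho g⁻¹ x)) := rfl
            _ = R.rho g (R.P m (R.rho g⁻¹ x)) := by rw [R.proj_idem]
        rw [Finset.sum_congr rfl (fun m _ => e1 m)]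
        calc ∑ m : M, R.rho g (R.P m (R.rho g⁻¹ x))
            = R.rho g (∑ m : M, R.P m (R.rho g⁻¹ x)) := (map_sum _ _ _).symm
          _ = R.rho g ((∑ m : M, R.P m) (R.rho g⁻¹ x)) := by rw [LinearMap.sum_apply]
          _ = R.rho g (R.rho g⁻¹ x) := by rw [R.proj_sum, Module.End.one_apply]
          _ = x := by rw [← Module.End.mul_apply, R.rho_mul_inv, Module.End.one_apply]
      rw [Finset.sum_congr rfl (fun g _ => hterm g), Finset.sum_const, Finset.card_univ,
        Nat.cast_smul_eq_nsmul]
    rw [hfix, smul_smul, inv_mul_cancel₀ hcard, one_smul]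
  have hπhom : π ∈ AGRep.homMG R R := Submodule.smul_mem _ _ hmem
  refine ⟨LinearMap.ker π, ?_, ?_, ?_⟩
  · intro g'
    rintro y ⟨x, hx, rfl⟩
    simp only [SetLike.mem_coe, LinearMap.mem_ker] at hx ⊢
    have hcomm := DFunLike.congr_fun (hπhom.1 g') x
    simp only [comp_apply] at hcomm
    rw [← hcomm, hx, map_zero]
  · intro m
    rintro y ⟨x, hx, rfl⟩
    simp only [SetLike.mem_coe, LinearMap.mem_ker] at hx ⊢
    have hcomm := DFunLike.congr_fun (hπhom.2 m) x
    simp only [comp_apply] at hcomm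
    rw [← hcomm, hx, map_zero]
  · exact (LinearMap.IsProj.mk hπmem hπfix : LinearMap.IsProj U π).isCompl

/-- The regular representation of the action groupoid. -/
@[reducible] def regRep : AGRep ℂ M G where
  carrier := M × G → ℂ
  P n := {
    toFun := fun φ p => if p.2 • p.1 = n then φ p else 0
    map_add' := by intro φ ψ; funext p; by_cases h : p.2 • p.1 = n <;> simp [h]
    map_smul' := by intro c φ; funext p; by_cases h : p.2 • p.1 = n <;> simp [h] }
  rho := {
    toFun := fun h => {
      toFun := fun φ p => φ (p.1, h⁻¹ * p.2)
      map_add' := by intro φ ψ; rfl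
      map_smul' := by intro c φ; rfl }
    map_one' := by
      refine LinearMap.ext fun φ => funext fun p => ?_
      simp
    map_mul' := by
      intro g h
      refine LinearMap.ext fun φ => funext fun p => ?_
      simp [Module.End.mul_apply, mul_inv_rev, mul_assoc] }
  proj_idem := by
    intro m
    refine LinearMap.ext fun φ => funext fun p => ?_
    simp only [Module.End.mul_apply, LinearMap.coe_mk, AddHom.coe_mk]
    by_cases h : p.2 • p.1 = m <;> simp [h]
  proj_orth := by
    intro m n hmn
    refine LinearMap.ext fun φ => funext fun p => ?_
    simp only [Module.End.mul_apply, LinearMap.coe_mk, AddHom.coe_mk, LinearMap.zero_apply]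
    by_cases h1 : p.2 • p.1 = m
    · by_cases h2 : p.2 • p.1 = n
      · exact absurd (h1.symm.trans h2) hmn
      · simp [h1, h2]
        exact fun hmn' => absurd hmn' hmn
    · simp [h1]
  proj_sum := by
    refine LinearMap.ext fun φ => funext fun p => ?_
    simp only [LinearMap.sum_apply, Finset.sum_apply, LinearMap.coe_mk, AddHom.coe_mk,
      Module.End.one_apply]
    simp [Finset.sum_ite_eq]
  compat := by
    intro g n
    refine LinearMap.ext fun φ => funext fun p => ?_
    simp only [Module.End.mul_apply, LinearMap.coe_mk, AddHom.coe_mk, MonoidHom.coe_mk,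
      OneHom.coe_mk]
    have hiff : (g⁻¹ * p.2) • p.1 = n ↔ p.2 • p.1 = g • n := by
      rw [mul_smul, inv_smul_eq_iff]
    by_cases hc : (g⁻¹ * p.2) • p.1 = n
    · rw [if_pos hc, if_pos (hiff.mp hc)]
    · rw [if_neg hc, if_neg (fun hh => hc (hiff.mpr hh))]

lemma regRep_f_eq_zero (f : FixA M G → ℂ)
    (hT : Tmap (regRep (M := M) (G := G)) f = 0) : f = 0 := by
  funext a
  obtain ⟨⟨m₀, g₀⟩, ha⟩ := a
  set δ : M × G → ℂ := fun p => if p = (m₀, (1 : G)) then 1 else 0 with hδ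
  have h0 := DFunLike.congr_fun hT δ
  simp only [LinearMap.zero_apply] at h0
  have h1 := congrFun h0 (m₀, g₀)
  simp only [Tmap, LinearMap.sum_apply, LinearMap.smul_apply, Finset.sum_apply, Pi.smul_apply,
    smul_eq_mul, Pi.zero_apply] at h1
  have hsum : ∀ b : FixA M G,
      f b * (((regRep (M := M) (G := G)).rho b.1.2 * (regRep (M := M) (G := G)).P b.1.1) δ)
        (m₀, g₀)
      = if b = (⟨(m₀, g₀), ha⟩ : FixA M G) then f b else 0 := by
    rintro ⟨⟨n, h⟩, hb⟩
    show f _ * (if ((h⁻¹ * g₀) • m₀ = n) then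
      (if ((m₀ : M), h⁻¹ * g₀) = (m₀, (1 : G)) then (1 : ℂ) else 0) else 0) = _
    have hpair : ((m₀ : M), h⁻¹ * g₀) = (m₀, (1 : G)) ↔ h = g₀ := by
      constructor
      · intro hp
        have := congrArg Prod.snd hp
        simp only at this
        rw [inv_mul_eq_one] at this
        exact this
      · intro hp
        subst hp
        rw [inv_mul_cancel]
    by_cases hh : h = g₀
    · subst hh
      rw [inv_mul_cancel, one_smul]
      by_cases hn : m₀ = n
      · subst hn
        rw [if_pos rfl, if_pos rfl, mul_one, if_pos (Subtype.ext rfl)]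
      · rw [if_neg hn, mul_zero, if_neg]
        intro hcontra
        have hcc := congrArg (fun (b : FixA M G) => b.1.1) hcontra
        simp only at hcc
        exact hn hcc.symm
    · have hd : (if ((m₀ : M), h⁻¹ * g₀) = (m₀, (1 : G)) then (1 : ℂ) else 0) = 0 :=
        if_neg (fun hp => hh (hpair.mp hp))
      have hbne : (⟨(n, h), hb⟩ : FixA M G) ≠ ⟨(m₀, g₀), ha⟩ := by
        intro hcontra
        have := congrArg (fun (b : FixA M G) => b.1.2) hcontra
        simp only at this
        exact hh this
      rw [if_neg hbne]
      by_cases hc : (h⁻¹ * g₀) • m₀ = n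
      · rw [if_pos hc, hd, mul_zero]
      · rw [if_neg hc, mul_zero]
  rw [Finset.sum_congr rfl (fun b _ => hsum b)] at h1
  rw [Finset.sum_ite_eq'] at h1
  rw [if_pos (Finset.mem_univ _)] at h1
  exact h1

/-- The key vanishing lemma. -/
lemma Tmap_eq_zero_of_forall {ι : Type} [Fintype ι] (V : ι → AGRep ℂ M G)
    (hirr : ∀ i, (V i).Irreducible)
    (hcomp : ∀ W : AGRep ℂ M G, W.Irreducible → ∃ i, W.Iso (V i))
    {f : FixA M G → ℂ} (hf : f ∈ classFun (M := M) (G := G))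
    (h0 : ∀ i, Tmap (V i) f = 0) :
    ∀ R : AGRep ℂ M G, Tmap R f = 0 := by
  intro R
  suffices H : ∀ (n : ℕ) (R : AGRep ℂ M G), Module.finrank ℂ R.carrier ≤ n → Tmap R f = 0 from
    H (Module.finrank ℂ R.carrier) R le_rfl
  intro n
  induction n with
  | zero =>
    intro R hRn
    have hsub : Subsingleton R.carrier := Module.finrank_zero_iff.mp (Nat.le_zero.mp hRn)
    ext x
    rw [Subsingleton.elim x 0]
    simp
  | succ n ih =>
    intro R hRn
    rcases subsingleton_or_nontrivial R.carrier with hs | hnt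
    · ext x
      rw [Subsingleton.elim x 0]
      simp
    by_cases hirrR : ∀ U : Submodule ℂ R.carrier,
        (∀ g : G, U.map (R.rho g) ≤ U) → (∀ m : M, U.map (R.P m) ≤ U) → U = ⊥ ∨ U = ⊤
    · obtain ⟨i, hiso⟩ := hcomp R ⟨hnt, hirrR⟩
      exact Tmap_iso hiso f (h0 i)
    · push_neg at hirrR
      obtain ⟨U, hUg, hUp, hbot, htop⟩ := hirrR
      obtain ⟨U', hU'g, hU'p, hcompl⟩ := maschke R U hUg hUp
      have hUlt : Module.finrank ℂ U ≤ n := by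
        have := Submodule.finrank_lt (K := ℂ) (V := R.carrier) htop
        omega
      have hU'top : U' ≠ ⊤ := by
        intro hE
        rw [hE] at hcompl
        exact hbot (disjoint_top.mp hcompl.disjoint)
      have hU'lt : Module.finrank ℂ U' ≤ n := by
        have := Submodule.finrank_lt (K := ℂ) (V := R.carrier) hU'top
        omega
      have hTU : Tmap (subAGRep R U hUg hUp) f = 0 := ih (subAGRep R U hUg hUp) hUlt
      have hTU' : Tmap (subAGRep R U' hU'g hU'p) f = 0 := ih (subAGRep R U' hU'g hU'p) hU'lt
      ext x
      have hx : x ∈ U ⊔ U' := by rw [hcompl.sup_eq_top]; trivial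
      obtain ⟨y, hy, z, hz, rfl⟩ := Submodule.mem_sup.mp hx
      have hTy : Tmap R f y = 0 := by
        have hrestr := Tmap_subAGRep R U hUg hUp f ⟨y, hy⟩
        rw [hTU] at hrestr
        exact hrestr.symm
      have hTz : Tmap R f z = 0 := by
        have hrestr := Tmap_subAGRep R U' hU'g hU'p f ⟨z, hz⟩
        rw [hTU'] at hrestr
        exact hrestr.symm
      simp [map_add, hTy, hTz]

lemma mem_classFun {f : FixA M G → ℂ} :
    f ∈ classFun (M := M) (G := G) ↔ ∀ (h : G) (a : FixA M G), f (actA h a) = f a := Iff.rfl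

/-- The character of `R` as a function on `FixA`. -/
def chiF (R : AGRep ℂ M G) : FixA M G → ℂ := fun a => R.char_s18 a.1.1 a.1.2

/-- The inverted character of `R` as a function on `FixA`. -/
def chiSF (R : AGRep ℂ M G) : FixA M G → ℂ := fun a => R.char_s18 a.1.1 a.1.2⁻¹

lemma chiF_mem (R : AGRep ℂ M G) : chiF R ∈ classFun (M := M) (G := G) := by
  intro h a
  exact R.char_conj h a.1.1 a.1.2

lemma chiSF_mem (R : AGRep ℂ M G) : chiSF R ∈ classFun (M := M) (G := G) := by
  intro h a
  show R.char_s18 (h • a.1.1) (h * a.1.2 * h⁻¹)⁻¹ = R.char_s18 a.1.1 a.1.2⁻¹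
  have hg : (h * a.1.2 * h⁻¹)⁻¹ = h * a.1.2⁻¹ * h⁻¹ := by group
  rw [hg]
  exact R.char_conj h a.1.1 a.1.2⁻¹

lemma sum_chi_orth {ι : Type} (V : ι → AGRep ℂ M G)
    (hirr : ∀ i, (V i).Irreducible)
    (hdist : ∀ i j, i ≠ j → ¬ (V i).Iso (V j)) (i j : ι) :
    ∑ a : FixA M G, chiF (V i) a * chiSF (V j) a
      = if i = j then (Fintype.card G : ℂ) else 0 := by
  have key : ∑ a : FixA M G, chiF (V i) a * chiSF (V j) a
      = ∑ g : G, ∑ m : M, (V i).char_s18 m g * (V j).char_s18 m g⁻¹ := by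
    have step1 : ∑ a : FixA M G, chiF (V i) a * chiSF (V j) a
        = ∑ p ∈ Finset.univ.filter (fun p : M × G => p.2 • p.1 = p.1),
            (V i).char_s18 p.1 p.2 * (V j).char_s18 p.1 p.2⁻¹ := by
      have hst := Finset.sum_subtype (p := fun p : M × G => p.2 • p.1 = p.1)
        (F := Subtype.fintype _)
        (Finset.univ.filter (fun p : M × G => p.2 • p.1 = p.1))
        (by intro x; simp) (fun p => (V i).char_s18 p.1 p.2 * (V j).char_s18 p.1 p.2⁻¹)
      exact hst.symm
    have step2 : ∑ p ∈ Finset.univ.filter (fun p : M × G => p.2 • p.1 = p.1),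
          (V i).char_s18 p.1 p.2 * (V j).char_s18 p.1 p.2⁻¹
        = ∑ p : M × G, (V i).char_s18 p.1 p.2 * (V j).char_s18 p.1 p.2⁻¹ := by
      refine Finset.sum_filter_of_ne ?_
      intro p _ hne
      by_contra hfix
      exact hne (by rw [(V i).char_eq_zero hfix, zero_mul])
    rw [step1, step2, Fintype.sum_prod_type, Finset.sum_comm]
  rw [key]
  have horth := AGRep.trace_Phi (V j) (V i)
  have hfin := AGRep.trace_Phi_eq_finrank (V j) (V i)
  rw [horth] at hfin
  rw [hfin]
  by_cases hij : i = j
  · subst hij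
    rw [if_pos rfl, AGRep.finrank_homMG_self (V i) (hirr i), Nat.cast_one, mul_one]
  · rw [if_neg hij]
    have hbot : AGRep.homMG (V j) (V i) = ⊥ := by
      rw [Submodule.eq_bot_iff]
      intro f hf
      by_cases hfz : f = 0
      · exact hfz
      · exact absurd (AGRep.iso_of_homMG (V j) (V i) (hirr j) (hirr i) hf hfz)
          (hdist j i (fun hji => hij hji.symm))
    rw [hbot, finrank_bot, Nat.cast_zero, mul_zero]

lemma Tmap_of_pair_zero (R : AGRep ℂ M G) (hR : R.Irreducible)
    {f : FixA M G → ℂ} (hf : f ∈ classFun (M := M) (G := G))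
    (hzero : ∑ a : FixA M G, f a * chiF R a = 0) : Tmap R f = 0 := by
  have hmem : (Tmap R f : R.carrier →ₗ[ℂ] R.carrier) ∈ AGRep.homMG R R := Tmap_mem R hf
  rw [AGRep.homMG_self_eq_span R hR, Submodule.mem_span_singleton] at hmem
  obtain ⟨μ, hμ⟩ := hmem
  have htr : trace ℂ R.carrier (Tmap R f) = μ * (Module.finrank ℂ R.carrier : ℂ) := by
    rw [← hμ, map_smul, trace_id, smul_eq_mul]
  rw [trace_Tmap] at htr
  have hzero2 : ∑ a : FixA M G, f a * R.char_s18 a.1.1 a.1.2 = 0 := hzero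
  rw [hzero2] at htr
  have hd : (Module.finrank ℂ R.carrier : ℂ) ≠ 0 := by
    haveI := hR.1
    exact Nat.cast_ne_zero.mpr Module.finrank_pos.ne'
  have hμ0 : μ = 0 := by
    rcases mul_eq_zero.mp htr.symm with h | h
    · exact h
    · exact absurd h hd
  rw [← hμ, hμ0, zero_smul]

end Main

end

/-- The number of isomorphism classes of irreducible complex representations of the
action groupoid `M//G` (for `G` a finite group acting on a finite set `M`) equals the
number of `G`-orbits of `A = {(m,g) : g·m = m}` under `h·(m,g) = (h·m, hgh⁻¹)`. -/
theorem agRep_card_irreducibles [Fintype G]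
    {ι : Type} [Fintype ι] (V : ι → AGRep ℂ M G)
    (hirr : ∀ i, (V i).Irreducible)
    (hdist : ∀ i j, i ≠ j → ¬ (V i).Iso (V j))
    (hcomp : ∀ W : AGRep ℂ M G, W.Irreducible → ∃ i, W.Iso (V i)) :
    Fintype.card ι = Nat.card (Quot (fixRel M G)) := by
  classical
  have hcard : (Fintype.card G : ℂ) ≠ 0 := Nat.cast_ne_zero.mpr Fintype.card_ne_zero
  set v : ι → classFun (M := M) (G := G) := fun i => ⟨chiSF (V i), chiSF_mem (V i)⟩ with hv
  -- linear independence of the characters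
  have hindep : LinearIndependent ℂ v := by
    refine LinearIndependent.of_comp (classFun (M := M) (G := G)).subtype ?_
    have hceq : ((classFun (M := M) (G := G)).subtype ∘ v) = fun i => chiSF (V i) := rfl
    rw [hceq, linearIndependent_iff']
    intro s g hsum j hj
    have hsum' : (∑ i ∈ s, g i • chiSF (V i)) = 0 := by simpa using hsum
    have hpair : ∑ a : FixA M G, chiF (V j) a * (∑ i ∈ s, g i • chiSF (V i)) a = 0 := by
      rw [hsum']
      simp
    have hexp : ∑ a : FixA M G, chiF (V j) a * (∑ i ∈ s, g i • chiSF (V i)) a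
        = ∑ i ∈ s, g i * ∑ a : FixA M G, chiF (V j) a * chiSF (V i) a := by
      have h1 : ∀ a : FixA M G, chiF (V j) a * (∑ i ∈ s, g i • chiSF (V i)) a
          = ∑ i ∈ s, g i * (chiF (V j) a * chiSF (V i) a) := by
        intro a
        simp only [Finset.sum_apply, Pi.smul_apply, smul_eq_mul, Finset.mul_sum]
        refine Finset.sum_congr rfl (fun i _ => ?_)
        ring
      rw [Finset.sum_congr rfl (fun a _ => h1 a), Finset.sum_comm]
      refine Finset.sum_congr rfl (fun i _ => ?_)
      rw [Finset.mul_sum]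
    rw [hexp] at hpair
    have hterm : ∀ i ∈ s, g i * ∑ a : FixA M G, chiF (V j) a * chiSF (V i) a
        = if j = i then g i * (Fintype.card G : ℂ) else 0 := by
      intro i _
      rw [sum_chi_orth V hirr hdist j i]
      by_cases hji : j = i <;> simp [hji]
    rw [Finset.sum_congr rfl hterm, Finset.sum_ite_eq, if_pos hj] at hpair
    exact (mul_eq_zero.mp hpair).resolve_right hcard
  -- spanning
  have hspan : ⊤ ≤ Submodule.span ℂ (Set.range v) := by
    intro x _
    set f : FixA M G → ℂ := (x : FixA M G → ℂ) with hfdef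
    have hfc : f ∈ classFun (M := M) (G := G) := x.2
    set c : ι → ℂ := fun j =>
      (Fintype.card G : ℂ)⁻¹ * ∑ a : FixA M G, f a * chiF (V j) a with hc
    set f' : FixA M G → ℂ := f - ∑ j : ι, c j • chiSF (V j) with hf'def
    have hf'c : f' ∈ classFun (M := M) (G := G) :=
      sub_mem hfc (Submodule.sum_mem _ (fun j _ => Submodule.smul_mem _ _ (chiSF_mem (V j))))
    have hf'pair : ∀ i : ι, ∑ a : FixA M G, f' a * chiF (V i) a = 0 := by
      intro i
      have hexp : ∑ a : FixA M G, f' a * chiF (V i) a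
          = (∑ a : FixA M G, f a * chiF (V i) a)
            - ∑ j : ι, c j * ∑ a : FixA M G, chiF (V i) a * chiSF (V j) a := by
        have h1 : ∀ a : FixA M G, f' a * chiF (V i) a
            = f a * chiF (V i) a - ∑ j : ι, c j * (chiF (V i) a * chiSF (V j) a) := by
          intro a
          rw [hf'def]
          simp only [Pi.sub_apply, Finset.sum_apply, Pi.smul_apply, smul_eq_mul]
          rw [sub_mul, Finset.sum_mul]
          congr 1
          refine Finset.sum_congr rfl (fun j _ => ?_)
          ring
        rw [Finset.sum_congr rfl (fun a _ => h1 a), Finset.sum_sub_distrib, Finset.sum_comm]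
        congr 1
        refine Finset.sum_congr rfl (fun j _ => ?_)
        rw [Finset.mul_sum]
      rw [hexp]
      have hsum2 : ∑ j : ι, c j * ∑ a : FixA M G, chiF (V i) a * chiSF (V j) a
          = c i * (Fintype.card G : ℂ) := by
        rw [Finset.sum_congr rfl
          (fun j _ => by rw [sum_chi_orth V hirr hdist i j, mul_ite, mul_zero])]
        rw [Finset.sum_ite_eq, if_pos (Finset.mem_univ i)]
      rw [hsum2]
      simp only [hc]
      rw [mul_comm ((Fintype.card G : ℂ)⁻¹) _, mul_assoc, inv_mul_cancel₀ hcard, mul_one,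
        sub_self]
    have hT0 : ∀ i, Tmap (V i) f' = 0 :=
      fun i => Tmap_of_pair_zero (V i) (hirr i) hf'c (hf'pair i)
    have hTreg : Tmap (regRep (M := M) (G := G)) f' = 0 :=
      Tmap_eq_zero_of_forall V hirr hcomp hf'c hT0 _
    have hf'0 : f' = 0 := regRep_f_eq_zero f' hTreg
    have hxeq : x = ∑ j : ι, c j • v j := by
      apply Subtype.ext
      have hrhs : ((∑ j : ι, c j • v j : classFun (M := M) (G := G)) : FixA M G → ℂ)
          = ∑ j : ι, c j • chiSF (V j) := by
        rw [AddSubmonoidClass.coe_finset_sum]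
        rfl
      rw [hrhs]
      have := sub_eq_zero.mp (hf'def ▸ hf'0)
      exact this
    rw [hxeq]
    exact Submodule.sum_mem _
      (fun j _ => Submodule.smul_mem _ _ (Submodule.subset_span ⟨j, rfl⟩))
  -- basis and dimension count
  let b : Module.Basis ι ℂ (classFun (M := M) (G := G)) := Module.Basis.mk hindep hspan
  have hcount1 : Module.finrank ℂ (classFun (M := M) (G := G)) = Fintype.card ι :=
    Module.finrank_eq_card_basis b
  -- equivalence with functions on the quotient
  let F : classFun (M := M) (G := G) →ₗ[ℂ] (Quot (fixRel M G) → ℂ) :=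
    { toFun := fun x => Quot.lift (fun a => (x : FixA M G → ℂ) a) (by
        rintro a bb ⟨h, h1, h2⟩
        have hb : actA h a = bb := Subtype.ext (Prod.ext h1 h2)
        rw [← hb]
        exact ((mem_classFun.mp x.2) h a).symm)
      map_add' := by
        intro x y
        funext q
        induction q using Quot.ind
        rfl
      map_smul' := by
        intro cc x
        funext q
        induction q using Quot.ind
        rfl }
  let Ginv : (Quot (fixRel M G) → ℂ) →ₗ[ℂ] classFun (M := M) (G := G) :=
    { toFun := fun u => ⟨fun a => u (Quot.mk _ a), by
        intro h a
        have hq : Quot.mk (fixRel M G) (actA h a) = Quot.mk _ a :=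
          (Quot.sound ⟨h, rfl, rfl⟩).symm
        show u (Quot.mk _ (actA h a)) = u (Quot.mk _ a)
        rw [hq]⟩
      map_add' := by intro u w; apply Subtype.ext; rfl
      map_smul' := by intro cc u; apply Subtype.ext; rfl }
  let e : classFun (M := M) (G := G) ≃ₗ[ℂ] (Quot (fixRel M G) → ℂ) :=
    { toFun := F
      invFun := Ginv
      left_inv := by intro x; apply Subtype.ext; rfl
      right_inv := by
        intro u
        funext q
        induction q using Quot.ind
        rfl
      map_add' := F.map_add'
      map_smul' := F.map_smul' }
  haveI : Finite (Quot (fixRel M G)) := Quot.finite _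
  haveI : Fintype (Quot (fixRel M G)) := Fintype.ofFinite _
  have hcount2 : Module.finrank ℂ (classFun (M := M) (G := G))
      = Fintype.card (Quot (fixRel M G)) := by
    rw [e.finrank_eq, Module.finrank_pi]
  rw [← hcount1, hcount2, Nat.card_eq_fintype_card]
end
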